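/- arXiv:1006.5516 — 2 statements merged into one kernel-verified Lean document; each statement's English description precedes it below -/
import Mathlib

section
/- Let R be a left-linear generalized semi-monadic TRS (GSM-TRS) over a ranked alphabet Σ. Then for every finite tree language L ⊆ T_Σ, the descendant set R*_Σ(L) is a recognizable tree language over Σ. -/
set_option autoImplicit false

/-!
Basic framework: ranked alphabets, terms, term rewrite systems,
bottom-up tree automata, recognizability.
A ranked alphabet is modelled by a (finite) type `σ` together with an
arity function `ar : σ → ℕ`.  `Tm.var n` denotes the variable `x_{n+1}`,
so `T_Σ(X_m)` corresponds to terms all of whose variables satisfy `n < m`,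
and ground terms (`T_Σ`) are terms satisfying `Tm.Ground`.
-/

/-- Terms over the ranked alphabet `(σ, ar)` with variables `x₁, x₂, …`
(`var n` is `x_{n+1}`). -/
inductive Tm (σ : Type) (ar : σ → ℕ) : Type
  | var : ℕ → Tm σ ar
  | app : (f : σ) → (Fin (ar f) → Tm σ ar) → Tm σ ar

namespace Tm

variable {σ γ : Type} {ar : σ → ℕ} {arγ : γ → ℕ}

/-- Application of a substitution `θ` (assigning a term to each variable). -/
def subst (θ : ℕ → Tm σ ar) : Tm σ ar → Tm σ ar
  | var n => θ n
  | app f ts => app f fun i => (ts i).subst θ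

/-- A term is ground if it contains no variables. -/
def Ground : Tm σ ar → Prop
  | var _ => False
  | app _ ts => ∀ i, (ts i).Ground

/-- The set of (indices of) variables occurring in a term. -/
def vars : Tm σ ar → Set ℕ
  | var n => {n}
  | app _ ts => ⋃ i, (ts i).vars

/-- Number of occurrences of the variable `x_{n+1}` in a term. -/
def count (n : ℕ) : Tm σ ar → ℕ
  | var m => if m = n then 1 else 0
  | app _ ts => ∑ i, (ts i).count n

/-- A term is linear if every variable occurs at most once in it. -/
def Linear (t : Tm σ ar) : Prop := ∀ n, t.count n ≤ 1

/-- The symbol `s` occurs in the term. -/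
def symOccurs (s : σ) : Tm σ ar → Prop
  | var _ => False
  | app f ts => f = s ∨ ∃ i, (ts i).symOccurs s

/-- Height of a term (constants and variables have height 0). -/
def height : Tm σ ar → ℕ
  | var _ => 0
  | app _ ts => Finset.univ.sup fun i => (ts i).height + 1

/-- Renaming of the alphabet along an arity-preserving map. -/
def map (ι : σ → γ) (h : ∀ s, arγ (ι s) = ar s) : Tm σ ar → Tm γ arγ
  | var n => var n
  | app f ts => app (ι f) fun i => (ts (Fin.cast (h f) i)).map ι h

/-- The subterm of `t` at a position (a list of argument indices), if defined. -/
def subAt : Tm σ ar → List ℕ → Option (Tm σ ar)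
  | t, [] => some t
  | var _, _ :: _ => none
  | app f ts, i :: p => if h : i < ar f then (ts ⟨i, h⟩).subAt p else none

/-- Subterm relation. -/
inductive Subtm : Tm σ ar → Tm σ ar → Prop
  | refl (t : Tm σ ar) : Subtm t t
  | app {s : Tm σ ar} {f : σ} {ts : Fin (ar f) → Tm σ ar} (i : Fin (ar f)) :
      Subtm s (ts i) → Subtm s (Tm.app f ts)

end Tm

section Rewriting

variable {σ γ : Type} {ar : σ → ℕ} {arγ : γ → ℕ}

/-- One-step rewriting by the rule set `R`: apply a rule under a substitution
at the root, or rewrite inside one argument. -/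
inductive Step (R : Set (Tm σ ar × Tm σ ar)) : Tm σ ar → Tm σ ar → Prop
  | rule {l r : Tm σ ar} (θ : ℕ → Tm σ ar) (h : (l, r) ∈ R) :
      Step R (l.subst θ) (r.subst θ)
  | congr {f : σ} {ts : Fin (ar f) → Tm σ ar} {t' : Tm σ ar} (i : Fin (ar f)) :
      Step R (ts i) t' → Step R (Tm.app f ts) (Tm.app f (Function.update ts i t'))

/-- Many-step rewriting: reflexive-transitive closure of `Step`. -/
def Steps (R : Set (Tm σ ar × Tm σ ar)) : Tm σ ar → Tm σ ar → Prop :=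
  Relation.ReflTransGen (Step R)

/-- `R` is a term rewrite system: finitely many rules, and every variable of a
right-hand side occurs in the corresponding left-hand side. -/
def IsTRS (R : Set (Tm σ ar × Tm σ ar)) : Prop :=
  R.Finite ∧ ∀ lr ∈ R, lr.2.vars ⊆ lr.1.vars

/-- The set `R*(L)` of descendants of members of `L`. -/
def Desc (R : Set (Tm σ ar × Tm σ ar)) (L : Set (Tm σ ar)) : Set (Tm σ ar) :=
  {p | ∃ q ∈ L, Steps R q p}

/-- `R` is terminating: there is no infinite reduction sequence. -/
def Terminating (R : Set (Tm σ ar × Tm σ ar)) : Prop :=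
  ¬ ∃ f : ℕ → Tm σ ar, ∀ n, Step R (f n) (f (n + 1))

/-- `R` is confluent. -/
def Confluent (R : Set (Tm σ ar × Tm σ ar)) : Prop :=
  ∀ a b c, Steps R a b → Steps R a c → ∃ d, Steps R b d ∧ Steps R c d

/-- `u` is an `R`-normal form of `t`. -/
def NormalFormOf (R : Set (Tm σ ar × Tm σ ar)) (t u : Tm σ ar) : Prop :=
  Steps R t u ∧ ¬ ∃ v, Step R u v

/-- The term is a variable. -/
def IsVarTm (t : Tm σ ar) : Prop := ∃ n, t = Tm.var n

/-- Every left-hand side is linear. -/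
def LeftLinearTRS (R : Set (Tm σ ar × Tm σ ar)) : Prop :=
  ∀ lr ∈ R, lr.1.Linear

/-- All left- and right-hand sides are linear. -/
def LinearTRS (R : Set (Tm σ ar × Tm σ ar)) : Prop :=
  ∀ lr ∈ R, lr.1.Linear ∧ lr.2.Linear

/-- No rule has a variable as left-hand side or as right-hand side. -/
def CollapseFree (R : Set (Tm σ ar × Tm σ ar)) : Prop :=
  ∀ lr ∈ R, ¬ IsVarTm lr.1 ∧ ¬ IsVarTm lr.2

/-- Transport of a rule set along an arity-preserving renaming of the alphabet. -/
def mapRules (ι : σ → γ) (h : ∀ s, arγ (ι s) = ar s) (R : Set (Tm σ ar × Tm σ ar)) :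
    Set (Tm γ arγ × Tm γ arγ) :=
  (fun lr => (lr.1.map ι h, lr.2.map ι h)) '' R

end Rewriting

/-- A bottom-up tree automaton over `(σ, ar)` with state type `Q`:
transition rules `δ(q₁,…,qₙ) → q`, λ-rules `q → q'`, and final states. -/
structure BTA (σ : Type) (ar : σ → ℕ) (Q : Type) where
  trans : ∀ f : σ, (Fin (ar f) → Q) → Q → Prop
  eps : Q → Q → Prop
  final : Q → Prop

namespace BTA

variable {σ : Type} {ar : σ → ℕ} {Q : Type}

/-- `t →* q`: the (ground) term `t` can be rewritten to the state `q`. -/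
inductive Reach (A : BTA σ ar Q) : Tm σ ar → Q → Prop
  | app {f : σ} {ts : Fin (ar f) → Tm σ ar} {qs : Fin (ar f) → Q} {q : Q} :
      (∀ i, Reach A (ts i) (qs i)) → A.trans f qs q → Reach A (Tm.app f ts) q
  | eps {t : Tm σ ar} {q q' : Q} : Reach A t q → A.eps q q' → Reach A t q'

/-- The tree language recognized by the automaton. -/
def Lang (A : BTA σ ar Q) : Set (Tm σ ar) := {t | ∃ q, A.final q ∧ A.Reach t q}

end BTA

/-- A tree language is recognizable if some bottom-up tree automaton with a
finite state set recognizes it. -/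
def Recognizable {σ : Type} {ar : σ → ℕ} (L : Set (Tm σ ar)) : Prop :=
  ∃ (Q : Type) (_ : Finite Q) (A : BTA σ ar Q), A.Lang = L

/-- `R` (a TRS over all of `σ`, thought of as `sign(R)`) preserves
recognizability of finite tree languages: for every ranked alphabet extending
`σ` (i.e. every finite type with an arity-preserving injection from `σ`) and
every finite tree language of ground terms, the descendant set is recognizable. -/
def PRF {σ : Type} {ar : σ → ℕ} (R : Set (Tm σ ar × Tm σ ar)) : Prop :=
  ∀ (γ : Type) (arγ : γ → ℕ), Finite γ →
    ∀ ι : σ → γ, Function.Injective ι →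
      ∀ h : ∀ s, arγ (ι s) = ar s,
        ∀ L : Set (Tm γ arγ), L.Finite → (∀ t ∈ L, t.Ground) →
          Recognizable (Desc (mapRules ι h R) L)

/-- `R` preserves recognizability: as `PRF`, but for arbitrary recognizable
tree languages. -/
def PR {σ : Type} {ar : σ → ℕ} (R : Set (Tm σ ar × Tm σ ar)) : Prop :=
  ∀ (γ : Type) (arγ : γ → ℕ), Finite γ →
    ∀ ι : σ → γ, Function.Injective ι →
      ∀ h : ∀ s, arγ (ι s) = ar s,
        ∀ L : Set (Tm γ arγ), Recognizable L →
          Recognizable (Desc (mapRules ι h R) L)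

/-! ### Statement 7: left-linear GSM-TRSs preserve recognizability of finite
tree languages. -/

section GSM

variable {σ : Type} {ar : σ → ℕ}

/-- `θ` unifies `a` and `b`. -/
def Unifies (θ : ℕ → Tm σ ar) (a b : Tm σ ar) : Prop := a.subst θ = b.subst θ

/-- `θ` is a most general unifier of `a` and `b`. -/
def IsMGU (θ : ℕ → Tm σ ar) (a b : Tm σ ar) : Prop :=
  Unifies θ a b ∧ ∀ τ, Unifies τ a b → ∃ ρ, ∀ n, τ n = (θ n).subst ρ

/-- `u` is a supertree of `v`: `u` is linear and `v` is a substitution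
instance of `u`. -/
def Supertree (u v : Tm σ ar) : Prop := u.Linear ∧ ∃ θ, u.subst θ = v

/-- `R` is a generalized semi-monadic TRS (GSM-TRS): no left-hand side is a
variable, and for any rules `l₁ → r₁`, `l₂ → r₂` of `R`, positions
`α ∈ POS(r₁)`, `β ∈ POS(l₂)`, and supertree `l₃` of `l₂/β` with
`var(l₃) ∩ var(l₁) = ∅`, if `α = λ` or `β = λ` and `θ` is a most general
unifier of `r₁/α` and `l₃`, then `l₂/β` is a variable, or for each
`γ ∈ POS(l₃)` with `l₂/βγ` a variable, `θ(l₃/γ)` is a variable or ground. -/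
def GSM (R : Set (Tm σ ar × Tm σ ar)) : Prop :=
  (∀ lr ∈ R, ¬ IsVarTm lr.1) ∧
  ∀ l₁ r₁ l₂ r₂ : Tm σ ar, (l₁, r₁) ∈ R → (l₂, r₂) ∈ R →
    ∀ (α β : List ℕ) (r₁α l₂β : Tm σ ar),
      r₁.subAt α = some r₁α → l₂.subAt β = some l₂β →
      ∀ l₃ : Tm σ ar, Supertree l₃ l₂β → (∀ n ∈ l₃.vars, n ∉ l₁.vars) →
        (α = [] ∨ β = []) →
        ∀ θ, IsMGU θ r₁α l₃ →
          IsVarTm l₂β ∨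
            ∀ (γ : List ℕ) (l₃γ : Tm σ ar), l₃.subAt γ = some l₃γ →
              (∃ v, l₂.subAt (β ++ γ) = some v ∧ IsVarTm v) →
              (IsVarTm (l₃γ.subst θ) ∨ (l₃γ.subst θ).Ground)

end GSM


/-! ### Auxiliary development -/

namespace GSMAux

open Tm

variable {σ : Type} {ar : σ → ℕ}

/-- Substitution only depends on the values on the variables. -/
theorem subst_congr {t : Tm σ ar} {θ τ : ℕ → Tm σ ar}
    (h : ∀ x ∈ t.vars, θ x = τ x) : t.subst θ = t.subst τ := by
  induction t with
  | var n => exact h n (by simp [Tm.vars])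
  | app f ts ih =>
      simp only [Tm.subst]
      congr 1
      funext i
      exact ih i (fun x hx => h x (by simp only [Tm.vars]; exact Set.mem_iUnion.2 ⟨i, hx⟩))

theorem subst_var (t : Tm σ ar) : t.subst Tm.var = t := by
  induction t with
  | var n => rfl
  | app f ts ih => simp only [Tm.subst]; congr 1; funext i; exact ih i

theorem subst_id_on_vars {t : Tm σ ar} {θ : ℕ → Tm σ ar}
    (h : ∀ x ∈ t.vars, θ x = Tm.var x) : t.subst θ = t := by
  rw [subst_congr h, subst_var]

theorem ground_iff_vars {t : Tm σ ar} : t.Ground ↔ t.vars = ∅ := by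
  induction t with
  | var n => simp [Tm.Ground, Tm.vars]
  | app f ts ih =>
      simp only [Tm.Ground, Tm.vars]
      constructor
      · intro h
        simp only [Set.iUnion_eq_empty]
        exact fun i => (ih i).1 (h i)
      · intro h i
        exact (ih i).2 (by
          have := Set.iUnion_eq_empty.1 h i
          exact this)

theorem ground_subst {t : Tm σ ar} {θ : ℕ → Tm σ ar}
    (h : ∀ x ∈ t.vars, (θ x).Ground) : (t.subst θ).Ground := by
  induction t with
  | var n => exact h n (by simp [Tm.vars])
  | app f ts ih =>
      intro i
      exact ih i (fun x hx => h x (by simp only [Tm.vars]; exact Set.mem_iUnion.2 ⟨i, hx⟩))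

theorem subst_of_ground {t : Tm σ ar} (h : t.Ground) (θ : ℕ → Tm σ ar) :
    t.subst θ = t := by
  apply subst_id_on_vars
  intro x hx
  rw [ground_iff_vars] at h
  simp [h] at hx

theorem not_var_of_ground {t : Tm σ ar} (h : t.Ground) : ¬ IsVarTm t := by
  rintro ⟨n, rfl⟩; exact h

theorem ground_app_iff {f : σ} {ts : Fin (ar f) → Tm σ ar} :
    (Tm.app f ts).Ground ↔ ∀ i, (ts i).Ground := Iff.rfl

/-- ground instance has ground substitution values on variables. -/
theorem ground_of_subst_ground {t : Tm σ ar} {θ : ℕ → Tm σ ar}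
    (h : (t.subst θ).Ground) : ∀ x ∈ t.vars, (θ x).Ground := by
  induction t with
  | var n => intro x hx; simp only [Tm.vars, Set.mem_singleton_iff] at hx; subst hx; exact h
  | app f ts ih =>
      intro x hx
      simp only [Tm.vars, Set.mem_iUnion] at hx
      obtain ⟨i, hi⟩ := hx
      exact ih i (h i) x hi

/-! ### subAt lemmas -/

theorem subAt_nil (t : Tm σ ar) : t.subAt [] = some t := by cases t <;> rfl

theorem subAt_append (t : Tm σ ar) (p q : List ℕ) :
    t.subAt (p ++ q) = (t.subAt p).bind (fun s => s.subAt q) := by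
  induction p generalizing t with
  | nil => simp [Tm.subAt]
  | cons i p ih =>
      cases t with
      | var n => simp [Tm.subAt]
      | app f ts =>
          simp only [List.cons_append, Tm.subAt]
          by_cases h : i < ar f
          · rw [dif_pos h, dif_pos h]; exact ih (ts ⟨i, h⟩)
          · rw [dif_neg h, dif_neg h]; rfl

theorem subAt_append_some {t s : Tm σ ar} {p q : List ℕ}
    (h : t.subAt (p ++ q) = some s) : ∃ u, t.subAt p = some u ∧ u.subAt q = some s := by
  rw [subAt_append] at h
  cases hu : t.subAt p with
  | none => rw [hu] at h; simp at h
  | some u => rw [hu] at h; exact ⟨u, rfl, h⟩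

theorem subAt_child {f : σ} {ts : Fin (ar f) → Tm σ ar} (i : Fin (ar f)) :
    (Tm.app f ts).subAt [(i : ℕ)] = some (ts i) := by
  simp only [Tm.subAt, i.isLt, dif_pos]

theorem subAt_subst {t s : Tm σ ar} {p : List ℕ} (h : t.subAt p = some s)
    (θ : ℕ → Tm σ ar) : (t.subst θ).subAt p = some (s.subst θ) := by
  induction p generalizing t with
  | nil => simp only [Tm.subAt] at h ⊢; rw [Option.some_inj] at h; rw [h]
  | cons i p ih =>
      cases t with
      | var n => simp [Tm.subAt] at h
      | app f ts =>
          simp only [Tm.subAt] at h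
          by_cases hi : i < ar f
          · rw [dif_pos hi] at h
            simp only [Tm.subst, Tm.subAt, dif_pos hi]
            exact ih h
          · rw [dif_neg hi] at h; exact absurd h (by simp)

theorem vars_subAt {t s : Tm σ ar} {p : List ℕ} (h : t.subAt p = some s) :
    s.vars ⊆ t.vars := by
  induction p generalizing t with
  | nil => simp only [Tm.subAt, Option.some_inj] at h; rw [h]
  | cons i p ih =>
      cases t with
      | var n => simp [Tm.subAt] at h
      | app f ts =>
          simp only [Tm.subAt] at h
          by_cases hi : i < ar f
          · rw [dif_pos hi] at h
            refine (ih h).trans ?_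
            intro x hx
            simp only [Tm.vars]
            exact Set.mem_iUnion.2 ⟨⟨i, hi⟩, hx⟩
          · rw [dif_neg hi] at h; exact absurd h (by simp)

theorem ground_subAt {t s : Tm σ ar} {p : List ℕ} (ht : t.Ground)
    (h : t.subAt p = some s) : s.Ground := by
  rw [ground_iff_vars] at ht ⊢
  have := vars_subAt h
  rw [ht] at this
  exact Set.eq_empty_iff_forall_notMem.2 (fun x hx => (this hx).elim)

theorem count_subAt {t s : Tm σ ar} {p : List ℕ} (h : t.subAt p = some s) (n : ℕ) :
    s.count n ≤ t.count n := by
  induction p generalizing t with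
  | nil => simp only [Tm.subAt, Option.some_inj] at h; rw [h]
  | cons i p ih =>
      cases t with
      | var m => simp [Tm.subAt] at h
      | app f ts =>
          simp only [Tm.subAt] at h
          by_cases hi : i < ar f
          · rw [dif_pos hi] at h
            refine (ih h).trans ?_
            simp only [Tm.count]
            exact Finset.single_le_sum (f := fun j => (ts j).count n)
              (fun j _ => Nat.zero_le _) (Finset.mem_univ (⟨i, hi⟩ : Fin (ar f)))
          · rw [dif_neg hi] at h; exact absurd h (by simp)

theorem linear_subAt {t s : Tm σ ar} {p : List ℕ} (ht : t.Linear)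
    (h : t.subAt p = some s) : s.Linear :=
  fun n => (count_subAt h n).trans (ht n)

theorem height_subAt {t s : Tm σ ar} {p : List ℕ} (h : t.subAt p = some s) :
    s.height ≤ t.height := by
  induction p generalizing t with
  | nil => simp only [Tm.subAt, Option.some_inj] at h; rw [h]
  | cons i p ih =>
      cases t with
      | var m => simp [Tm.subAt] at h
      | app f ts =>
          simp only [Tm.subAt] at h
          by_cases hi : i < ar f
          · rw [dif_pos hi] at h
            refine (ih h).trans ?_
            simp only [Tm.height]
            calc (ts ⟨i, hi⟩).height ≤ (ts ⟨i, hi⟩).height + 1 := Nat.le_succ _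
            _ ≤ _ := Finset.le_sup (f := fun j => (ts j).height + 1) (Finset.mem_univ (⟨i, hi⟩ : Fin (ar f)))
          · rw [dif_neg hi] at h; exact absurd h (by simp)

theorem height_subst {t : Tm σ ar} {θ : ℕ → Tm σ ar} {H : ℕ}
    (h : ∀ x ∈ t.vars, (θ x).height ≤ H) : (t.subst θ).height ≤ t.height + H := by
  induction t with
  | var n => simpa [Tm.subst, Tm.height] using h n (by simp [Tm.vars])
  | app f ts ih =>
      simp only [Tm.subst, Tm.height]
      apply Finset.sup_le
      intro i _
      have hi : ((ts i).subst θ).height ≤ (ts i).height + H :=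
        ih i (fun x hx => h x (by simp only [Tm.vars]; exact Set.mem_iUnion.2 ⟨i, hx⟩))
      have h2 := Finset.le_sup (f := fun j => (ts j).height + 1) (Finset.mem_univ i)
      have h2' : (ts i).height + 1 ≤ Finset.univ.sup fun j => (ts j).height + 1 := h2
      omega

/-- Variables of a term as a Finset. -/
def vfin : Tm σ ar → Finset ℕ
  | Tm.var n => {n}
  | Tm.app _ ts => Finset.univ.sup fun i => vfin (ts i)

theorem mem_vfin {t : Tm σ ar} {n : ℕ} : n ∈ vfin t ↔ n ∈ t.vars := by
  induction t with
  | var m => simp [vfin, Tm.vars]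
  | app f ts ih =>
      simp only [vfin, Tm.vars, Finset.mem_sup, Set.mem_iUnion]
      constructor
      · rintro ⟨i, _, hi⟩; exact ⟨i, (ih i).1 hi⟩
      · rintro ⟨i, hi⟩; exact ⟨i, Finset.mem_univ i, (ih i).2 hi⟩

/-! ### Length-indexed rewriting -/

variable {R : Set (Tm σ ar × Tm σ ar)}

section StepsN

variable (R)

/-- `n`-step rewriting. -/
inductive StepsN : ℕ → Tm σ ar → Tm σ ar → Prop
  | refl (t : Tm σ ar) : StepsN 0 t t
  | tail {n : ℕ} {a b c : Tm σ ar} : StepsN n a b → Step R b c → StepsN (n + 1) a c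

/-- `n`-step rewriting with no step at the root. -/
inductive NR : ℕ → Tm σ ar → Tm σ ar → Prop
  | refl (t : Tm σ ar) : NR 0 t t
  | tail {n : ℕ} {a : Tm σ ar} {f : σ} {ts : Fin (ar f) → Tm σ ar} {t' : Tm σ ar}
      (i : Fin (ar f)) : NR n a (Tm.app f ts) → Step R (ts i) t' →
      NR (n + 1) a (Tm.app f (Function.update ts i t'))

end StepsN

theorem StepsN.trans {m n : ℕ} {a b c : Tm σ ar}
    (h1 : StepsN R m a b) (h2 : StepsN R n b c) : StepsN R (m + n) a c := by
  induction h2 with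
  | refl t => exact h1
  | tail _ step ih => exact (ih h1).tail step

theorem StepsN.single {a b : Tm σ ar} (h : Step R a b) : StepsN R 1 a b :=
  (StepsN.refl a).tail h

theorem stepsN_steps {n : ℕ} {a b : Tm σ ar} (h : StepsN R n a b) : Steps R a b := by
  induction h with
  | refl t => exact Relation.ReflTransGen.refl
  | tail h step ih => exact ih.tail step

theorem steps_iff_stepsN {a b : Tm σ ar} : Steps R a b ↔ ∃ n, StepsN R n a b := by
  constructor
  · intro h
    induction h with
    | refl => exact ⟨0, StepsN.refl a⟩
    | tail h step ih => obtain ⟨n, hn⟩ := ih; exact ⟨n + 1, hn.tail step⟩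
  · rintro ⟨n, hn⟩; exact stepsN_steps hn

theorem nr_stepsN {n : ℕ} {a b : Tm σ ar} (h : NR R n a b) : StepsN R n a b := by
  induction h with
  | refl t => exact StepsN.refl t
  | tail i h step ih => exact ih.tail (Step.congr i step)

/-- single-argument congruence for many-step rewriting. -/
theorem steps_congr_one {f : σ} {ts : Fin (ar f) → Tm σ ar} {t' : Tm σ ar}
    (i : Fin (ar f)) (h : Steps R (ts i) t') :
    Steps R (Tm.app f ts) (Tm.app f (Function.update ts i t')) := by
  induction h with
  | refl => rw [Function.update_eq_self]; exact Relation.ReflTransGen.refl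
  | @tail b c h step ih =>
      have : Step R (Tm.app f (Function.update ts i b)) (Tm.app f (Function.update ts i c)) := by
        have := Step.congr (R := R) (f := f) (ts := Function.update ts i b) i
          (by rw [Function.update_self]; exact step)
        rwa [Function.update_idem] at this
      exact ih.tail this

/-- full congruence for many-step rewriting. -/
theorem steps_app_congr {f : σ} {as bs : Fin (ar f) → Tm σ ar}
    (h : ∀ i, Steps R (as i) (bs i)) : Steps R (Tm.app f as) (Tm.app f bs) := by
  have main : ∀ (s : Finset (Fin (ar f))) (bs : Fin (ar f) → Tm σ ar),
      (∀ i ∈ s, Steps R (as i) (bs i)) → (∀ i ∉ s, as i = bs i) →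
      Steps R (Tm.app f as) (Tm.app f bs) := by
    intro s
    induction s using Finset.induction_on with
    | empty =>
        intro bs _ h2
        have : as = bs := funext fun i => h2 i (by simp)
        rw [this]
        exact Relation.ReflTransGen.refl
    | @insert a s ha ih =>
        intro bs h1 h2
        have step1 : Steps R (Tm.app f as) (Tm.app f (Function.update bs a (as a))) := by
          apply ih
          · intro i hi
            rw [Function.update_of_ne (fun hia => ha (by rw [← hia]; exact hi))]
            exact h1 i (Finset.mem_insert_of_mem hi)
          · intro i hi
            by_cases hia : i = a
            · subst hia; rw [Function.update_self]
            · rw [Function.update_of_ne hia]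
              exact h2 i (fun hmem => by
                rcases Finset.mem_insert.1 hmem with h' | h'
                · exact hia h'
                · exact hi h')
        have step2 : Steps R (Tm.app f (Function.update bs a (as a))) (Tm.app f bs) := by
          have := steps_congr_one (R := R) (f := f) (ts := Function.update bs a (as a)) a
            (by rw [Function.update_self]; exact h1 a (Finset.mem_insert_self a s))
          rwa [Function.update_idem, Function.update_eq_self] at this
        exact step1.trans step2
  exact main Finset.univ bs (fun i _ => h i) (fun i hi => absurd (Finset.mem_univ i) hi)

theorem steps_subst_mono {t : Tm σ ar} {θ τ : ℕ → Tm σ ar}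
    (h : ∀ x ∈ t.vars, Steps R (θ x) (τ x)) :
    Steps R (t.subst θ) (t.subst τ) := by
  induction t with
  | var n => exact h n (by simp [Tm.vars])
  | app f ts ih =>
      exact steps_app_congr fun i =>
        ih i (fun x hx => h x (by simp only [Tm.vars]; exact Set.mem_iUnion.2 ⟨i, hx⟩))

/-- Decomposition of root-step-free derivations from an application. -/
theorem nr_decompose {n : ℕ} {f : σ} {as : Fin (ar f) → Tm σ ar} {b : Tm σ ar}
    (h : NR R n (Tm.app f as) b) :
    ∃ (bs : Fin (ar f) → Tm σ ar) (ks : Fin (ar f) → ℕ),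
      b = Tm.app f bs ∧ (∀ i, StepsN R (ks i) (as i) (bs i)) ∧ ∀ i, ks i ≤ n := by
  generalize hstart : Tm.app f as = a at h
  induction h with
  | refl t =>
      exact ⟨as, fun _ => 0, hstart.symm, fun i => StepsN.refl _, fun i => le_refl 0⟩
  | @tail n a g ts t' i h step ih =>
      obtain ⟨bs, ks, hb, hsteps, hks⟩ := ih hstart
      injection hb with hfg hts
      subst hfg
      have hts' : ts = bs := eq_of_heq hts
      subst hts'
      refine ⟨Function.update ts i t', Function.update ks i (ks i + 1), rfl, ?_, ?_⟩
      · intro j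
        by_cases hj : j = i
        · subst hj
          rw [Function.update_self, Function.update_self]
          exact (hsteps j).tail step
        · rw [Function.update_of_ne hj, Function.update_of_ne hj]
          exact hsteps j
      · intro j
        by_cases hj : j = i
        · subst hj; rw [Function.update_self]; have := hks j; omega
        · rw [Function.update_of_ne hj]; have := hks j; omega

theorem split_last_root {n : ℕ} {s t : Tm σ ar} (h : StepsN R n s t) :
    NR R n s t ∨ ∃ (j k' : ℕ) (l r : Tm σ ar) (τ : ℕ → Tm σ ar),
      (l, r) ∈ R ∧ j + 1 + k' = n ∧ StepsN R j s (l.subst τ) ∧ NR R k' (r.subst τ) t := by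
  induction h with
  | refl t => exact Or.inl (NR.refl t)
  | @tail n a b c h step ih =>
      cases step with
      | @rule l r τ hlr =>
          exact Or.inr ⟨n, 0, l, r, τ, hlr, by omega, h, NR.refl _⟩
      | @congr f ts t' i hstep =>
          rcases ih with hnr | ⟨j, k', l, r, τ, hlr, hn, hpre, hnr⟩
          · exact Or.inl (hnr.tail i hstep)
          · exact Or.inr ⟨j, k' + 1, l, r, τ, hlr, by omega, hpre, hnr.tail i hstep⟩

theorem step_ground (hvars : ∀ lr ∈ R, (lr.2 : Tm σ ar).vars ⊆ lr.1.vars)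
    {a b : Tm σ ar} (h : Step R a b) (ha : a.Ground) : b.Ground := by
  induction h with
  | @rule l r τ hlr =>
      exact ground_subst fun x hx => ground_of_subst_ground ha x (hvars _ hlr hx)
  | @congr f ts t' i hstep ih =>
      intro j
      by_cases hj : j = i
      · subst hj; rw [Function.update_self]; exact ih (ha j)
      · rw [Function.update_of_ne hj]; exact ha j

theorem steps_ground (hvars : ∀ lr ∈ R, (lr.2 : Tm σ ar).vars ⊆ lr.1.vars)
    {a b : Tm σ ar} (h : Steps R a b) (ha : a.Ground) : b.Ground := by
  induction h with
  | refl => exact ha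
  | tail h step ih => exact step_ground hvars step ih

/-! ### Finiteness of bounded-height ground terms -/

theorem height_app_le {f : σ} {ts : Fin (ar f) → Tm σ ar} {m : ℕ}
    (h : (Tm.app f ts).height ≤ m) (i : Fin (ar f)) : (ts i).height + 1 ≤ m := by
  have := Finset.le_sup (f := fun j => (ts j).height + 1) (Finset.mem_univ i)
  have h2 : (ts i).height + 1 ≤ (Tm.app f ts).height := this
  omega

theorem finite_ground_height [Finite σ] (H : ℕ) :
    {t : Tm σ ar | t.Ground ∧ t.height ≤ H}.Finite := by
  induction H with
  | zero =>
      apply Set.Finite.subset (Set.finite_range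
        (fun q : {f : σ // ar f = 0} => Tm.app q.1 (fun i => (Fin.cast q.2 i).elim0)))
      rintro t ⟨hg, hh⟩
      cases t with
      | var n => exact absurd hg (by simp [Tm.Ground])
      | app f ts =>
          have h0 : ar f = 0 := by
            by_contra h
            have i : Fin (ar f) := ⟨0, Nat.pos_of_ne_zero h⟩
            have := height_app_le hh i
            omega
          refine ⟨⟨f, h0⟩, ?_⟩
          simp only
          congr 1
          funext i
          exact (Fin.cast h0 i).elim0
  | succ H ih =>
      haveI := ih.to_subtype
      apply Set.Finite.subset (Set.finite_range
        (fun p : (Σ f : σ, (Fin (ar f) → {t : Tm σ ar // t ∈ {t : Tm σ ar | t.Ground ∧ t.height ≤ H}})) =>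
          Tm.app p.1 (fun i => (p.2 i).val)))
      rintro t ⟨hg, hh⟩
      cases t with
      | var n => exact absurd hg (by simp [Tm.Ground])
      | app f ts =>
          refine ⟨⟨f, fun i => ⟨ts i, hg i, by have := height_app_le hh i; omega⟩⟩, rfl⟩

/-! ### State sets -/

section States

variable (R : Set (Tm σ ar × Tm σ ar)) (L : Set (Tm σ ar))

/-- All terms of `L` together with all rule sides. -/
def baseSet : Set (Tm σ ar) := L ∪ {t | ∃ lr ∈ R, t = lr.1 ∨ t = lr.2}

/-- Ground subterms of base terms. -/
def Gset : Set (Tm σ ar) :=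
  {s | s.Ground ∧ ∃ t ∈ baseSet R L, ∃ p, t.subAt p = some s}

/-- Admissible state patterns: subterms of right-hand sides, or ground base
subterms. -/
def WOK (w : Tm σ ar) : Prop :=
  (∃ lr ∈ R, ∃ p, (lr.2 : Tm σ ar).subAt p = some w) ∨ w ∈ Gset R L

/-- The state set: instances of admissible patterns with bindings in `Gset`. -/
def Tset : Set (Tm σ ar) :=
  {t | ∃ w g, WOK R L w ∧ (∀ x ∈ w.vars, g x ∈ Gset R L) ∧ t = w.subst g}

variable {R L}

theorem Gset_ground {s : Tm σ ar} (h : s ∈ Gset R L) : s.Ground := h.1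

theorem Gset_subAt {s s' : Tm σ ar} {p : List ℕ} (h : s ∈ Gset R L)
    (h' : s.subAt p = some s') : s' ∈ Gset R L := by
  obtain ⟨hg, t, ht, q, hq⟩ := h
  refine ⟨ground_subAt hg h', t, ht, q ++ p, ?_⟩
  rw [subAt_append, hq]
  exact h'

theorem L_subset_Gset (hground : ∀ t ∈ L, t.Ground) : L ⊆ Gset R L :=
  fun t ht => ⟨hground t ht, t, Or.inl ht, [], subAt_nil t⟩

theorem Gset_subset_Tset {s : Tm σ ar} (h : s ∈ Gset R L) : s ∈ Tset R L := by
  refine ⟨s, Tm.var, Or.inr h, ?_, (subst_var s).symm⟩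
  intro x hx
  have hv : s.vars = ∅ := ground_iff_vars.1 (Gset_ground h)
  rw [hv] at hx
  exact absurd hx (Set.notMem_empty x)

theorem WOK_ground_or_piece {w : Tm σ ar} (h : WOK R L w) :
    (∃ lr ∈ R, ∃ p, (lr.2 : Tm σ ar).subAt p = some w) ∨ w ∈ Gset R L := h

theorem Tset_ground {t : Tm σ ar} (h : t ∈ Tset R L) : t.Ground := by
  obtain ⟨w, g, _, hg, rfl⟩ := h
  exact ground_subst fun x hx => Gset_ground (hg x hx)

theorem Tset_finite [Finite σ] (hR : R.Finite) (hL : L.Finite) :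
    (Tset R L).Finite := by
  have hbase : (baseSet R L).Finite := by
    apply Set.Finite.union hL
    have h1 : {t : Tm σ ar | ∃ lr ∈ R, t = lr.1 ∨ t = lr.2} ⊆
        (fun lr : Tm σ ar × Tm σ ar => lr.1) '' R ∪ (fun lr : Tm σ ar × Tm σ ar => lr.2) '' R := by
      rintro t ⟨lr, hlr, h | h⟩
      · exact Or.inl ⟨lr, hlr, h.symm⟩
      · exact Or.inr ⟨lr, hlr, h.symm⟩
    exact Set.Finite.subset ((hR.image _).union (hR.image _)) h1
  have hbdd : ∃ H, ∀ t ∈ baseSet R L, Tm.height t ≤ H := by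
    obtain ⟨H, hH⟩ := (hbase.image Tm.height).bddAbove
    exact ⟨H, fun t ht => hH ⟨t, ht, rfl⟩⟩
  obtain ⟨H, hH⟩ := hbdd
  apply Set.Finite.subset (finite_ground_height (H + H))
  rintro t ⟨w, g, hw, hg, rfl⟩
  have hwh : w.height ≤ H := by
    rcases hw with ⟨lr, hlr, p, hp⟩ | ⟨_, t', ht', p, hp⟩
    · exact (height_subAt hp).trans (hH _ (Or.inr ⟨lr, hlr, Or.inr rfl⟩))
    · exact (height_subAt hp).trans (hH _ ht')
  have hgh : ∀ x ∈ w.vars, (g x).height ≤ H := by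
    intro x hx
    obtain ⟨_, t', ht', p, hp⟩ := hg x hx
    exact (height_subAt hp).trans (hH _ ht')
  refine ⟨ground_subst fun x hx => Gset_ground (hg x hx), ?_⟩
  exact (height_subst hgh).trans (by omega)

end States

/-! ### The automaton construction -/

theorem recognizable_of_factor {R : Set (Tm σ ar × Tm σ ar)} {L : Set (Tm σ ar)}
    (hvars : ∀ lr ∈ R, (lr.2 : Tm σ ar).vars ⊆ lr.1.vars)
    (T : Set (Tm σ ar)) (hT : T.Finite) (hLT : L ⊆ T)
    (hground : ∀ t ∈ L, t.Ground)
    (hfac : ∀ t ∈ T, ∀ (f : σ) (ps : Fin (ar f) → Tm σ ar),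
      Steps R t (Tm.app f ps) →
      ∃ ts : Fin (ar f) → Tm σ ar,
        (∀ i, ts i ∈ T ∧ Steps R (ts i) (ps i)) ∧ Steps R t (Tm.app f ts)) :
    Recognizable (Desc R L) := by
  haveI : Finite ↥T := hT.to_subtype
  refine ⟨↥T, inferInstance, ⟨fun f qs q => Steps R q.val (Tm.app f (fun i => (qs i).val)),
    fun _ _ => False, fun q => q.val ∈ L⟩, ?_⟩
  apply Set.eq_of_subset_of_subset
  · rintro t ⟨q, hfin, hreach⟩
    refine ⟨q.val, hfin, ?_⟩
    clear hfin
    induction hreach with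
    | @app f ts qs q h htrans ih =>
        exact htrans.trans (steps_app_congr ih)
    | eps _ hfalse => exact hfalse.elim
  · rintro p ⟨q0, hq0, hsteps⟩
    have hgp : p.Ground := steps_ground hvars hsteps (hground _ hq0)
    have main : ∀ p : Tm σ ar, p.Ground → ∀ t : ↥T, Steps R t.val p →
        BTA.Reach ⟨fun f qs q => Steps R q.val (Tm.app f (fun i => (qs i).val)),
          fun _ _ => False, fun q => q.val ∈ L⟩ p t := by
      intro p
      induction p with
      | var n => intro hg; exact absurd hg (by simp [Tm.Ground])
      | app f ps ih =>
          intro hg t hsteps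
          obtain ⟨ts, h1, h2⟩ := hfac t.val t.2 f ps hsteps
          exact BTA.Reach.app (qs := fun i => ⟨ts i, (h1 i).1⟩)
            (fun i => ih i (hg i) _ ((h1 i).2)) h2
    exact ⟨⟨q0, hLT hq0⟩, hq0, main p hgp _ hsteps⟩

/-! ### Spine prunings and the GSM overlap argument -/

/-- Count is positive iff the variable occurs. -/
theorem count_pos_iff {t : Tm σ ar} {n : ℕ} : 1 ≤ t.count n ↔ n ∈ t.vars := by
  induction t with
  | var m =>
      simp only [Tm.count, Tm.vars, Set.mem_singleton_iff]
      by_cases h : m = n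
      · subst h; simp
      · simp [h, Ne.symm h]
  | app f ts ih =>
      simp only [Tm.count, Tm.vars, Set.mem_iUnion]
      constructor
      · intro h
        by_contra hn
        push_neg at hn
        have : ∀ i ∈ Finset.univ, (ts i).count n = 0 := by
          intro i _
          by_contra h0
          exact hn i ((ih i).1 (by omega))
        rw [Finset.sum_eq_zero this] at h
        omega
      · rintro ⟨i, hi⟩
        have h1 : 1 ≤ (ts i).count n := (ih i).2 hi
        have h2 := Finset.single_le_sum (f := fun j => (ts j).count n)
          (fun j _ => Nat.zero_le _) (Finset.mem_univ i)
        have h3 : (ts i).count n ≤ ∑ j, (ts j).count n := h2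
        omega

/-- fresh variable names -/
def frv (N : ℕ) (δ : List ℕ) : ℕ := N + Encodable.encode δ

theorem frv_inj {N : ℕ} {δ δ' : List ℕ} (h : frv N δ = frv N δ') : δ = δ' := by
  have : Encodable.encode δ = Encodable.encode δ' := by
    simp only [frv] at h; omega
  exact Encodable.encode_injective this

theorem frv_ge {N : ℕ} (δ : List ℕ) : N ≤ frv N δ := Nat.le_add_right N _

/-- The pruning of a term along a spine `ρ`, with fresh variables elsewhere;
`δ` is the absolute position of the current node (used only for naming). -/
def spine (N : ℕ) : Tm σ ar → List ℕ → List ℕ → Tm σ ar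
  | _, [], δ => Tm.var (frv N δ)
  | Tm.var _, _ :: _, δ => Tm.var (frv N δ)
  | Tm.app h ts, j :: ρ, δ =>
      Tm.app h (fun j' => if j'.val = j then spine N (ts j') ρ (δ ++ [j'.val])
        else Tm.var (frv N (δ ++ [j'.val])))

/-- The substitution sending the fresh variable at position `δ` to the
subterm of `X` at `δ`. -/
noncomputable def chunkSub (N : ℕ) (X : Tm σ ar) : ℕ → Tm σ ar := fun n =>
  if N ≤ n then
    match (Encodable.decode (n - N) : Option (List ℕ)) with
    | some δ => (X.subAt δ).getD (Tm.var n)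
    | none => Tm.var n
  else Tm.var n

theorem chunkSub_frv (N : ℕ) (X : Tm σ ar) (δ : List ℕ) :
    chunkSub N X (frv N δ) = (X.subAt δ).getD (Tm.var (frv N δ)) := by
  simp only [chunkSub, frv, if_pos (Nat.le_add_right N _), Nat.add_sub_cancel_left,
    Encodable.encodek]

/-- spine substituted with the chunks of `X` gives back the corresponding
chunk of `X`, provided the rigid parts agree along the spine. -/
theorem spine_subst_chunk {A B : Tm σ ar} {N : ℕ} :
    ∀ (ρ δ : List ℕ) (t a : Tm σ ar),
      B.subAt δ = some t → A.subAt δ = some a →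
      (∀ δ', δ' <+: ρ → δ' ≠ ρ → ∃ (h : σ) (cs : Fin (ar h) → Tm σ ar)
          (ds : Fin (ar h) → Tm σ ar),
          A.subAt (δ ++ δ') = some (Tm.app h cs) ∧ B.subAt (δ ++ δ') = some (Tm.app h ds)) →
      (spine N t ρ δ).subst (chunkSub N A) = a := by
  intro ρ
  induction ρ with
  | nil =>
      intro δ t a hB hA _
      simp only [spine, Tm.subst, chunkSub_frv, hA, Option.getD_some]
  | cons j ρ' ih =>
      intro δ t a hB hA hsp
      obtain ⟨h, cs, ds, hAc, hBc⟩ := hsp [] List.nil_prefix (by simp)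
      rw [List.append_nil] at hAc hBc
      rw [hB] at hBc
      rw [hA] at hAc
      have ht : t = Tm.app h ds := Option.some.inj hBc
      have ha : a = Tm.app h cs := Option.some.inj hAc
      subst ht; subst ha
      simp only [spine, Tm.subst]
      congr 1
      funext j'
      by_cases hj : (j' : ℕ) = j
      · rw [if_pos hj]
        apply ih (δ ++ [(j' : ℕ)]) (ds j') (cs j')
        · rw [subAt_append, hB]
          exact subAt_child j'
        · rw [subAt_append, hA]
          exact subAt_child j'
        · intro δ' hpre hne
          have : (j :: δ') <+: (j :: ρ') := by
            rw [List.cons_prefix_cons]; exact ⟨rfl, hpre⟩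
          obtain ⟨h2, cs2, ds2, hA2, hB2⟩ := hsp (j :: δ') this (by
            intro hcontra; injection hcontra with _ h'; exact hne h')
          have hl : (δ ++ [(j' : ℕ)]) ++ δ' = δ ++ (j :: δ') := by rw [hj]; simp
          exact ⟨h2, cs2, ds2, by rw [hl]; exact hA2, by rw [hl]; exact hB2⟩
      · rw [if_neg hj]
        show chunkSub N A (frv N (δ ++ [(j' : ℕ)])) = cs j'
        rw [chunkSub_frv, subAt_append, hA]
        have hchild : (Tm.app h cs).subAt [(j' : ℕ)] = some (cs j') := subAt_child j'
        simp [hchild]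

/-- characterization of occurrences of variables in a spine. -/
theorem spine_count {N : ℕ} :
    ∀ (ρ δ : List ℕ) (t : Tm σ ar) (n : ℕ),
      (spine N t ρ δ).count n ≤ 1 ∧
      (1 ≤ (spine N t ρ δ).count n → ∃ δ', n = frv N δ' ∧ δ <+: δ') := by
  intro ρ
  induction ρ with
  | nil =>
      intro δ t n
      constructor
      · simp only [spine, Tm.count]; split <;> omega
      · intro h
        simp only [spine, Tm.count] at h
        refine ⟨δ, ?_, List.prefix_refl δ⟩
        by_contra hne
        rw [if_neg (fun he => hne he.symm)] at h
        omega
  | cons j ρ' ih =>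
      intro δ t n
      cases t with
      | var m =>
          constructor
          · simp only [spine, Tm.count]; split <;> omega
          · intro h
            simp only [spine, Tm.count] at h
            refine ⟨δ, ?_, List.prefix_refl δ⟩
            by_contra hne
            rw [if_neg (fun he => hne he.symm)] at h
            omega
      | app f ts =>
          have key : ∀ j' : Fin (ar f),
              ((if (j' : ℕ) = j then spine N (ts j') ρ' (δ ++ [(j' : ℕ)])
                else Tm.var (frv N (δ ++ [(j' : ℕ)]))).count n ≤ 1 ∧
              (1 ≤ (if (j' : ℕ) = j then spine N (ts j') ρ' (δ ++ [(j' : ℕ)])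
                else Tm.var (frv N (δ ++ [(j' : ℕ)]))).count n →
                ∃ δ', n = frv N δ' ∧ (δ ++ [(j' : ℕ)]) <+: δ')) := by
            intro j'
            by_cases hj : (j' : ℕ) = j
            · rw [if_pos hj]; exact ih (δ ++ [(j' : ℕ)]) (ts j') n
            · rw [if_neg hj]
              constructor
              · simp only [Tm.count]; split <;> omega
              · intro h
                simp only [Tm.count] at h
                refine ⟨δ ++ [(j' : ℕ)], ?_, List.prefix_refl _⟩
                by_contra hne
                rw [if_neg (fun he => hne he.symm)] at h
                omega
          have hone : ∀ j₁ j₂ : Fin (ar f), j₁ ≠ j₂ →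
              1 ≤ ((if (j₁ : ℕ) = j then spine N (ts j₁) ρ' (δ ++ [(j₁ : ℕ)])
                else Tm.var (frv N (δ ++ [(j₁ : ℕ)]))).count n) →
              ((if (j₂ : ℕ) = j then spine N (ts j₂) ρ' (δ ++ [(j₂ : ℕ)])
                else Tm.var (frv N (δ ++ [(j₂ : ℕ)]))).count n) = 0 := by
            intro j₁ j₂ hne h1
            by_contra h2
            obtain ⟨δ₁, hδ₁, hp₁⟩ := (key j₁).2 h1
            obtain ⟨δ₂, hδ₂, hp₂⟩ := (key j₂).2 (by omega)
            have hδeq : δ₁ = δ₂ := frv_inj (by rw [← hδ₁, ← hδ₂])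
            subst hδeq
            rcases List.prefix_or_prefix_of_prefix hp₁ hp₂ with hc | hc
            · have := hc.eq_of_length (by simp)
              have h3 : (j₁ : ℕ) = (j₂ : ℕ) := by
                have := List.append_cancel_left this
                injection this
              exact hne (Fin.ext h3)
            · have := hc.eq_of_length (by simp)
              have h3 : (j₂ : ℕ) = (j₁ : ℕ) := by
                have := List.append_cancel_left this
                injection this
              exact hne (Fin.ext h3.symm)
          have hcount : (spine N (Tm.app f ts) (j :: ρ') δ).count n =
              ∑ j' : Fin (ar f), ((if (j' : ℕ) = j then spine N (ts j') ρ' (δ ++ [(j' : ℕ)])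
                else Tm.var (frv N (δ ++ [(j' : ℕ)]))).count n) := by
            simp only [spine, Tm.count]
          constructor
          · rw [hcount]
            by_cases hall : ∀ j' : Fin (ar f),
                ((if (j' : ℕ) = j then spine N (ts j') ρ' (δ ++ [(j' : ℕ)])
                  else Tm.var (frv N (δ ++ [(j' : ℕ)]))).count n) = 0
            · rw [Finset.sum_eq_zero (fun j' _ => hall j')]; omega
            · push_neg at hall
              obtain ⟨j₀, hj₀⟩ := hall
              rw [Finset.sum_eq_single j₀ (fun j' _ hj' => hone j₀ j' (Ne.symm hj') (by omega))
                (fun h => absurd (Finset.mem_univ j₀) h)]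
              exact (key j₀).1
          · intro hpos
            rw [hcount] at hpos
            have : ∃ j₀ : Fin (ar f),
                1 ≤ ((if (j₀ : ℕ) = j then spine N (ts j₀) ρ' (δ ++ [(j₀ : ℕ)])
                  else Tm.var (frv N (δ ++ [(j₀ : ℕ)]))).count n) := by
              by_contra hno
              push_neg at hno
              have : ∀ j' : Fin (ar f), j' ∈ Finset.univ → ((if (j' : ℕ) = j then spine N (ts j') ρ'
                  (δ ++ [(j' : ℕ)]) else Tm.var (frv N (δ ++ [(j' : ℕ)]))).count n) = 0 :=
                fun j' _ => by have := hno j'; omega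
              rw [Finset.sum_eq_zero this] at hpos
              omega
            obtain ⟨j₀, hj₀⟩ := this
            obtain ⟨δ', hδ', hp⟩ := (key j₀).2 hj₀
            exact ⟨δ', hδ', ((δ.prefix_append [(j₀ : ℕ)]).trans hp)⟩

theorem spine_nil {N : ℕ} (t : Tm σ ar) (δ : List ℕ) :
    spine N t [] δ = Tm.var (frv N δ) := by cases t <;> rfl

theorem spine_linear {N : ℕ} (ρ δ : List ℕ) (t : Tm σ ar) :
    (spine N t ρ δ).Linear := fun n => (spine_count ρ δ t n).1

/-- every variable of a spine sits at some position where `A` has a chunk. -/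
theorem spine_var_pos {A B : Tm σ ar} {N : ℕ} :
    ∀ (ρ δ : List ℕ) (t a : Tm σ ar) (n : ℕ),
      B.subAt δ = some t → A.subAt δ = some a →
      (∀ δ', δ' <+: ρ → δ' ≠ ρ → ∃ (h : σ) (cs ds : Fin (ar h) → Tm σ ar),
          A.subAt (δ ++ δ') = some (Tm.app h cs) ∧ B.subAt (δ ++ δ') = some (Tm.app h ds)) →
      n ∈ (spine N t ρ δ).vars →
      ∃ δ₂, n = frv N (δ ++ δ₂) ∧ (spine N t ρ δ).subAt δ₂ = some (Tm.var n) ∧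
        ∃ c, A.subAt (δ ++ δ₂) = some c := by
  intro ρ
  induction ρ with
  | nil =>
      intro δ t a n hB hA _ hn
      simp only [spine, Tm.vars, Set.mem_singleton_iff] at hn
      exact ⟨[], by rw [List.append_nil]; exact hn, by rw [subAt_nil, spine_nil, hn],
        a, by rw [List.append_nil]; exact hA⟩
  | cons j ρ' ih =>
      intro δ t a n hB hA hsp hn
      obtain ⟨h, cs, ds, hAc, hBc⟩ := hsp [] List.nil_prefix (by simp)
      rw [List.append_nil] at hAc hBc
      rw [hB] at hBc; rw [hA] at hAc
      have ht : t = Tm.app h ds := Option.some.inj hBc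
      have ha : a = Tm.app h cs := Option.some.inj hAc
      subst ht; subst ha
      simp only [spine, Tm.vars, Set.mem_iUnion] at hn
      obtain ⟨j', hj'⟩ := hn
      by_cases hj : (j' : ℕ) = j
      · rw [if_pos hj] at hj'
        have hBc' : B.subAt (δ ++ [(j' : ℕ)]) = some (ds j') := by
          rw [subAt_append, hB]; exact subAt_child j'
        have hAc' : A.subAt (δ ++ [(j' : ℕ)]) = some (cs j') := by
          rw [subAt_append, hA]; exact subAt_child j'
        have hsp' : ∀ δ', δ' <+: ρ' → δ' ≠ ρ' → ∃ (h2 : σ)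
            (cs2 ds2 : Fin (ar h2) → Tm σ ar),
            A.subAt ((δ ++ [(j' : ℕ)]) ++ δ') = some (Tm.app h2 cs2) ∧
            B.subAt ((δ ++ [(j' : ℕ)]) ++ δ') = some (Tm.app h2 ds2) := by
          intro δ' hpre hne
          have hp2 : (j :: δ') <+: (j :: ρ') := by
            rw [List.cons_prefix_cons]; exact ⟨rfl, hpre⟩
          obtain ⟨h2, cs2, ds2, hA2, hB2⟩ := hsp (j :: δ') hp2 (by
            intro hcontra; injection hcontra with _ h'; exact hne h')
          have hl : (δ ++ [(j' : ℕ)]) ++ δ' = δ ++ (j :: δ') := by rw [hj]; simp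
          exact ⟨h2, cs2, ds2, by rw [hl]; exact hA2, by rw [hl]; exact hB2⟩
        obtain ⟨δ₂, hδ₂, hsub, c, hc⟩ :=
          ih (δ ++ [(j' : ℕ)]) (ds j') (cs j') n hBc' hAc' hsp' hj'
        refine ⟨(j' : ℕ) :: δ₂, by simpa using hδ₂, ?_, c, by simpa using hc⟩
        show (Tm.app h _).subAt ((j' : ℕ) :: δ₂) = some (Tm.var n)
        simp only [Tm.subAt, j'.isLt, dif_pos]
        have : (⟨(j' : ℕ), j'.isLt⟩ : Fin (ar h)) = j' := by simp
        rw [this, if_pos hj]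
        exact hsub
      · rw [if_neg hj] at hj'
        simp only [Tm.vars, Set.mem_singleton_iff] at hj'
        refine ⟨[(j' : ℕ)], by simpa using hj', ?_, cs j', by
          rw [subAt_append, hA]; exact subAt_child j'⟩
        show (Tm.app h _).subAt [(j' : ℕ)] = some (Tm.var n)
        simp only [Tm.subAt, j'.isLt, dif_pos]
        have : (⟨(j' : ℕ), j'.isLt⟩ : Fin (ar h)) = j' := by simp
        rw [this, if_neg hj, hj']

/-- the spine has its fresh variable at the end of the spine position. -/
theorem spine_subAt_end {N : ℕ} :
    ∀ (ρ δ : List ℕ) (t v : Tm σ ar), t.subAt ρ = some v →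
      (spine N t ρ δ).subAt ρ = some (Tm.var (frv N (δ ++ ρ))) := by
  intro ρ
  induction ρ with
  | nil => intro δ t v _; rw [subAt_nil]; simp [spine]
  | cons j ρ' ih =>
      intro δ t v hv
      cases t with
      | var m => simp [Tm.subAt] at hv
      | app f ts =>
          simp only [Tm.subAt] at hv
          by_cases hjf : j < ar f
          · rw [dif_pos hjf] at hv
            show (Tm.app f _).subAt (j :: ρ') = some _
            simp only [Tm.subAt, dif_pos hjf]
            rw [if_pos trivial]
            have := ih (δ ++ [j]) (ts ⟨j, hjf⟩) v hv
            rw [List.append_assoc] at this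
            simpa using this
          · rw [dif_neg hjf] at hv; exact absurd hv (by simp)

/-- The key overlap argument: a non-variable chunk of a right-hand side that
sits (along a rigidly matching spine) at a variable position of a left-hand
side must be ground. -/
theorem gsm_catch {R : Set (Tm σ ar × Tm σ ar)} (hR : IsTRS R) (hgsm : GSM R)
    {l₁ r₁ l₂ r₂ : Tm σ ar} (h1 : (l₁, r₁) ∈ R) (h2 : (l₂, r₂) ∈ R)
    {α₀ β₀ π : List ℕ} (hleg : α₀ = [] ∨ β₀ = [])
    {c : Tm σ ar} (hc : r₁.subAt (α₀ ++ π) = some c) (hcnv : ¬ IsVarTm c)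
    {y : ℕ} (hy : l₂.subAt (β₀ ++ π) = some (Tm.var y))
    (hsp : ∀ δ', δ' <+: π → δ' ≠ π → ∃ (h : σ) (cs ds : Fin (ar h) → Tm σ ar),
        r₁.subAt (α₀ ++ δ') = some (Tm.app h cs) ∧ l₂.subAt (β₀ ++ δ') = some (Tm.app h ds))
    (hπ : π ≠ []) : c.Ground := by
  obtain ⟨A, hA, hAπ⟩ := subAt_append_some hc
  obtain ⟨B, hB, hBπ⟩ := subAt_append_some hy
  -- relative spine condition
  have hsp' : ∀ δ', δ' <+: π → δ' ≠ π → ∃ (h : σ) (cs ds : Fin (ar h) → Tm σ ar),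
      A.subAt δ' = some (Tm.app h cs) ∧ B.subAt δ' = some (Tm.app h ds) := by
    intro δ' hpre hne
    obtain ⟨h, cs, ds, hA2, hB2⟩ := hsp δ' hpre hne
    rw [subAt_append, hA] at hA2
    rw [subAt_append, hB] at hB2
    exact ⟨h, cs, ds, hA2, hB2⟩
  have hBapp : ∃ (h : σ) (ds : Fin (ar h) → Tm σ ar), B = Tm.app h ds := by
    obtain ⟨h, cs, ds, hA2, hB2⟩ := hsp' [] List.nil_prefix (Ne.symm hπ)
    rw [subAt_nil] at hB2
    exact ⟨h, ds, Option.some.inj hB2.symm |>.symm⟩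
  set N := (vfin l₁).sup id + 1 with hN
  have hNl₁ : ∀ x ∈ l₁.vars, x < N := by
    intro x hx
    have := Finset.le_sup (f := id) (mem_vfin.2 hx)
    simp only [id] at this
    omega
  have hNA : ∀ x ∈ A.vars, x < N := by
    intro x hx
    exact hNl₁ x (hR.2 (l₁, r₁) h1 (vars_subAt hA hx))
  set l₃ : Tm σ ar := spine N B π [] with hl₃
  have hBnil : B.subAt ([] : List ℕ) = some B := subAt_nil B
  have hAnil : A.subAt ([] : List ℕ) = some A := subAt_nil A
  have hsp'' : ∀ δ', δ' <+: π → δ' ≠ π → ∃ (h : σ) (cs ds : Fin (ar h) → Tm σ ar),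
      A.subAt (([] : List ℕ) ++ δ') = some (Tm.app h cs) ∧
      B.subAt (([] : List ℕ) ++ δ') = some (Tm.app h ds) := by
    intro δ' hpre hne
    simpa using hsp' δ' hpre hne
  have hspB : ∀ δ', δ' <+: π → δ' ≠ π → ∃ (h : σ) (cs ds : Fin (ar h) → Tm σ ar),
      B.subAt (([] : List ℕ) ++ δ') = some (Tm.app h cs) ∧
      B.subAt (([] : List ℕ) ++ δ') = some (Tm.app h ds) := by
    intro δ' hpre hne
    obtain ⟨h, cs, ds, _, hB2⟩ := hsp'' δ' hpre hne
    exact ⟨h, ds, ds, hB2, hB2⟩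
  -- l₃ variables sit above N
  have hvarN : ∀ n ∈ l₃.vars, N ≤ n := by
    intro n hn
    obtain ⟨δ₂, hδ₂, _, _⟩ := spine_var_pos (A := A) (B := B) π [] B A n hBnil hAnil hsp'' hn
    rw [hδ₂]
    exact frv_ge _
  -- supertree
  have hsup : Supertree l₃ B := by
    refine ⟨spine_linear π [] B, fun n => if n ∈ vfin l₃ then chunkSub N B n else Tm.var n, ?_⟩
    have h1' : l₃.subst (fun n => if n ∈ vfin l₃ then chunkSub N B n else Tm.var n) =
        l₃.subst (chunkSub N B) :=
      subst_congr (fun x hx => if_pos (mem_vfin.2 hx))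
    rw [h1']
    exact spine_subst_chunk (A := B) (B := B) π [] B B hBnil hBnil hspB
  set θs : ℕ → Tm σ ar := fun n => if n ∈ vfin l₃ then chunkSub N A n else Tm.var n with hθs
  have hAid : A.subst θs = A := by
    apply subst_id_on_vars
    intro x hx
    simp only [hθs]
    rw [if_neg]
    intro hmem
    exact absurd (hvarN x (mem_vfin.1 hmem)) (by have := hNA x hx; omega)
  have hunif : Unifies θs A l₃ := by
    show A.subst θs = l₃.subst θs
    rw [hAid]
    have h1' : l₃.subst θs = l₃.subst (chunkSub N A) :=
      subst_congr (fun x hx => if_pos (mem_vfin.2 hx))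
    rw [h1']
    exact (spine_subst_chunk (A := A) (B := B) π [] B A hBnil hAnil hsp'').symm
  have hmgu : IsMGU θs A l₃ := by
    refine ⟨hunif, ?_⟩
    intro τ hτ
    refine ⟨τ, fun n => ?_⟩
    by_cases hn : n ∈ vfin l₃
    · obtain ⟨δ₂, hδ₂, hsub, cδ, hcδ⟩ :=
        spine_var_pos (A := A) (B := B) π [] B A n hBnil hAnil hsp'' (mem_vfin.1 hn)
      simp only [List.nil_append] at hδ₂ hcδ
      have hθn : θs n = cδ := by
        have hn' := hn
        rw [hδ₂] at hn'
        simp only [hθs, hδ₂, chunkSub_frv, hcδ, Option.getD_some, if_pos hn']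
      rw [hθn]
      have e1 : (l₃.subst τ).subAt δ₂ = some (τ n) := by
        have := subAt_subst hsub τ
        simpa [Tm.subst] using this
      have e2 : (A.subst τ).subAt δ₂ = some (cδ.subst τ) := subAt_subst hcδ τ
      rw [hτ] at e2
      rw [e1] at e2
      exact Option.some.inj e2
    · simp only [hθs, if_neg hn, Tm.subst]
  have hdisj : ∀ n ∈ l₃.vars, n ∉ l₁.vars := by
    intro n hn hmem
    exact absurd (hvarN n hn) (by have := hNl₁ n hmem; omega)
  rcases hgsm.2 l₁ r₁ l₂ r₂ h1 h2 α₀ β₀ A B hA hB l₃ hsup hdisj hleg θs hmgu with hvar | hmain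
  · obtain ⟨h, ds, rfl⟩ := hBapp
    obtain ⟨n, hn⟩ := hvar
    exact absurd hn (by simp)
  · have hsubπ : l₃.subAt π = some (Tm.var (frv N π)) := by
      have := spine_subAt_end (N := N) π [] B (Tm.var y) hBπ
      simpa using this
    have hres := hmain π (Tm.var (frv N π)) hsubπ ⟨Tm.var y, hy, y, rfl⟩
    have hfrvmem : frv N π ∈ vfin l₃ := by
      apply mem_vfin.2
      have := vars_subAt hsubπ
      exact this (by simp [Tm.vars])
    have hval : (Tm.var (frv N π)).subst θs = c := by
      show θs (frv N π) = c
      simp only [hθs, if_pos hfrvmem, chunkSub_frv, hAπ, Option.getD_some]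
    rw [hval] at hres
    exact hres.resolve_left hcnv

/-! ### Small helpers for the main induction -/

theorem prefix_snoc_cases {α : Type*} {l1 l2 : List α} {a : α} (h : l1 <+: l2 ++ [a]) :
    l1 <+: l2 ∨ l1 = l2 ++ [a] := by
  by_cases hlen : l1.length ≤ l2.length
  · exact Or.inl (List.prefix_of_prefix_length_le h (List.prefix_append l2 [a]) hlen)
  · right
    have h1 : (l2 ++ [a]).length ≤ l1.length := by
      simp only [List.length_append, List.length_cons, List.length_nil] at *
      omega
    exact h.eq_of_length (Nat.le_antisymm h.length_le h1)

/-- Size of a term. -/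
def tsize : Tm σ ar → ℕ
  | Tm.var _ => 1
  | Tm.app _ ts => 1 + ∑ i, tsize (ts i)

theorem tsize_child {f : σ} {ts : Fin (ar f) → Tm σ ar} (i : Fin (ar f)) :
    tsize (ts i) < tsize (Tm.app f ts) := by
  have := Finset.single_le_sum (f := fun j => tsize (ts j)) (fun j _ => Nat.zero_le _)
    (Finset.mem_univ i)
  have h2 : tsize (ts i) ≤ ∑ j, tsize (ts j) := this
  simp only [tsize]
  omega

theorem vars_app_mem {f : σ} {ts : Fin (ar f) → Tm σ ar} {i : Fin (ar f)} {x : ℕ}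
    (hx : x ∈ (ts i).vars) : x ∈ (Tm.app f ts).vars := Set.mem_iUnion.2 ⟨i, hx⟩

theorem linear_app_child_eq {f : σ} {ts : Fin (ar f) → Tm σ ar}
    (hlin : (Tm.app f ts).Linear) {x : ℕ} {i i' : Fin (ar f)}
    (h1 : x ∈ (ts i).vars) (h2 : x ∈ (ts i').vars) : i = i' := by
  by_contra hne
  have c1 : 1 ≤ (ts i).count x := count_pos_iff.2 h1
  have c2 : 1 ≤ (ts i').count x := count_pos_iff.2 h2
  have hp : ∑ j ∈ ({i, i'} : Finset (Fin (ar f))), (ts j).count x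
      = (ts i).count x + (ts i').count x := Finset.sum_pair hne
  have hsum : (ts i).count x + (ts i').count x ≤ ∑ j, (ts j).count x := by
    rw [← hp]
    exact Finset.sum_le_sum_of_subset (Finset.subset_univ _)
  have hc : (Tm.app f ts).count x ≤ 1 := hlin x
  have : (∑ j, (ts j).count x) ≤ 1 := hc
  omega

theorem subAt_append_child {t : Tm σ ar} {pos : List ℕ} {f : σ}
    {ts : Fin (ar f) → Tm σ ar} (h : t.subAt pos = some (Tm.app f ts)) (i : Fin (ar f)) :
    t.subAt (pos ++ [(i : ℕ)]) = some (ts i) := by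
  rw [subAt_append, h]
  simpa using subAt_child i

theorem not_isVar_app {f : σ} {ts : Fin (ar f) → Tm σ ar} : ¬ IsVarTm (Tm.app f ts) := by
  rintro ⟨n, hn⟩
  cases hn

theorem tm_shape (t : Tm σ ar) : (∃ n, t = Tm.var n) ∨ ∃ f ts, t = Tm.app f ts := by
  cases t with
  | var n => exact Or.inl ⟨n, rfl⟩
  | app f ts => exact Or.inr ⟨f, ts, rfl⟩

/-! ### The main consumption lemma -/

theorem Cmain {R : Set (Tm σ ar × Tm σ ar)} {L : Set (Tm σ ar)}
    (hR : IsTRS R) (hll : LeftLinearTRS R) (hgsm : GSM R) :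
    ∀ (ν s k mlink : ℕ), k + mlink ≤ ν →
    ∀ (w : Tm σ ar) (g θ' : ℕ → Tm σ ar),
      (∀ x ∈ w.vars, g x ∈ Gset R L ∧ ∃ m ≤ mlink, StepsN R m (g x) (θ' x)) →
      ¬ IsVarTm w →
    ∀ (l₂ r₂ : Tm σ ar) (pos : List ℕ) (u : Tm σ ar) (θ : ℕ → Tm σ ar),
      (l₂, r₂) ∈ R → l₂.subAt pos = some u → ¬ IsVarTm u →
      tsize u ≤ s →
      (w ∈ Gset R L ∨ ∃ l₁ r₁ α₀ β₀ γ, (l₁, r₁) ∈ R ∧ pos = β₀ ++ γ ∧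
        (α₀ = [] ∨ β₀ = []) ∧ r₁.subAt (α₀ ++ γ) = some w ∧
        (∀ δ', δ' <+: γ → δ' ≠ γ → ∃ (h : σ) (cs ds : Fin (ar h) → Tm σ ar),
          r₁.subAt (α₀ ++ δ') = some (Tm.app h cs) ∧ l₂.subAt (β₀ ++ δ') = some (Tm.app h ds))) →
      StepsN R k (w.subst θ') (u.subst θ) →
      ∃ θh : ℕ → Tm σ ar,
        (∀ x ∈ u.vars, θh x ∈ Gset R L ∧ ∃ m ≤ ν, StepsN R m (θh x) (θ x)) ∧
        Steps R (w.subst g) (u.subst θh) := by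
  intro ν
  induction ν using Nat.strong_induction_on with
  | _ ν IHν =>
  intro s
  induction s using Nat.strong_induction_on with
  | _ s IHs =>
  intro k mlink hν w g θ' hg hwnv l₂ r₂ pos u θ h2 hpos hunv hsize hmode hder
  classical
  cases u with
  | var n => exact absurd ⟨n, rfl⟩ hunv
  | app fu us =>
  cases w with
  | var n => exact absurd ⟨n, rfl⟩ hwnv
  | app fw ws =>
  rcases split_last_root hder with hnr | ⟨j, k', l', r', τ, hl'r', hjk, hpre, hsuf⟩
  · -- no root step: simultaneous descent
    have hnr' : NR R k (Tm.app fw (fun i => (ws i).subst θ'))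
        (Tm.app fu (fun i => (us i).subst θ)) := hnr
    obtain ⟨bs, ks, hb, hsteps, hks⟩ := nr_decompose hnr'
    injection hb with hf hb2
    subst hf
    have hb3 : (fun i => (us i).subst θ) = bs := eq_of_heq hb2
    subst hb3
    have hsteps' : ∀ i : Fin (ar fu), StepsN R (ks i) ((ws i).subst θ') ((us i).subst θ) :=
      hsteps
    -- per-child treatment
    have hchild : ∀ i : Fin (ar fu), ∃ θi : ℕ → Tm σ ar,
        (∀ x ∈ (us i).vars, θi x ∈ Gset R L ∧ ∃ m ≤ ν, StepsN R m (θi x) (θ x)) ∧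
        Steps R ((ws i).subst g) ((us i).subst θi) := by
      intro i
      have hposchild : l₂.subAt (pos ++ [(i : ℕ)]) = some (us i) := subAt_append_child hpos i
      -- membership of (ws i) in Gset when it is not a variable
      have hwsG : IsVarTm (us i) → ¬ IsVarTm (ws i) → ws i ∈ Gset R L := by
        intro husvar hwsnv
        rcases hmode with hmodeB | ⟨l₁, r₁, α₀, β₀, γ, h1, hposeq, hleg, hw, hspγ⟩
        · exact Gset_subAt hmodeB (subAt_child i)
        · -- GSM catch
          obtain ⟨y, hy⟩ := husvar
          have hspext : ∀ δ', δ' <+: γ ++ [(i : ℕ)] → δ' ≠ γ ++ [(i : ℕ)] →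
              ∃ (h : σ) (cs ds : Fin (ar h) → Tm σ ar),
              r₁.subAt (α₀ ++ δ') = some (Tm.app h cs) ∧
              l₂.subAt (β₀ ++ δ') = some (Tm.app h ds) := by
            intro δ' hpre' hne'
            rcases prefix_snoc_cases hpre' with hc | hc
            · by_cases hcγ : δ' = γ
              · subst hcγ
                refine ⟨fu, ws, us, hw, ?_⟩
                rw [← hposeq]
                exact hpos
              · exact hspγ δ' hc hcγ
            · exact absurd hc hne'
          have hcatch : (ws i).Ground := by
            apply gsm_catch hR hgsm h1 h2 hleg (c := ws i) ?_ hwsnv (y := y) ?_ hspext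
              (by simp)
            · rw [← List.append_assoc]
              exact subAt_append_child hw i
            · rw [← List.append_assoc, ← hposeq, ← hy]
              exact hposchild
          exact ⟨hcatch, r₁, Or.inr ⟨(l₁, r₁), h1, Or.inr rfl⟩, α₀ ++ (γ ++ [(i : ℕ)]), by
            rw [← List.append_assoc]; exact subAt_append_child hw i⟩
      rcases tm_shape (us i) with ⟨y, hus⟩ | ⟨fc, cs, hus⟩
      · -- consumer variable: a catch
        rcases tm_shape (ws i) with ⟨x, hws⟩ | ⟨fc2, cs2, hws⟩
        · have hxw : x ∈ (Tm.app fu ws).vars := vars_app_mem (f := fu) (ts := ws)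
            (i := i) (by rw [hws]; simp [Tm.vars])
          obtain ⟨hgG, m, hm, hlink⟩ := hg x hxw
          refine ⟨fun _ => g x, ?_, ?_⟩
          · intro x' hx'
            rw [hus] at hx'
            simp only [Tm.vars, Set.mem_singleton_iff] at hx'
            subst hx'
            refine ⟨hgG, m + ks i, by have := hks i; omega, ?_⟩
            have h1 : StepsN R (ks i) (θ' x) ((us i).subst θ) := by
              have hh := hsteps' i
              rw [hws] at hh
              exact hh
            rw [hus] at h1
            exact hlink.trans h1
          · rw [hws, hus]
            exact Relation.ReflTransGen.refl
        · have hwsnv : ¬ IsVarTm (ws i) := by rw [hws]; exact not_isVar_app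
          have hG : ws i ∈ Gset R L := hwsG ⟨y, hus⟩ hwsnv
          have hgr : (ws i).Ground := Gset_ground hG
          refine ⟨fun _ => ws i, ?_, ?_⟩
          · intro x' hx'
            rw [hus] at hx'
            simp only [Tm.vars, Set.mem_singleton_iff] at hx'
            subst hx'
            refine ⟨hG, ks i, by have := hks i; omega, ?_⟩
            have h1 := hsteps' i
            rw [subst_of_ground hgr, hus] at h1
            exact h1
          · rw [subst_of_ground hgr, hus]
            exact Relation.ReflTransGen.refl
      · -- consumer non-variable: recurse
        have husnv : ¬ IsVarTm (us i) := by rw [hus]; exact not_isVar_app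
        have hsize' : tsize (us i) < s := by
          have h1 : tsize (us i) < tsize (Tm.app fu us) := tsize_child i
          omega
        rcases tm_shape (ws i) with ⟨x, hws⟩ | ⟨fc2, cs2, hws⟩
        · have hxw : x ∈ (Tm.app fu ws).vars := vars_app_mem (f := fu) (ts := ws)
            (i := i) (by rw [hws]; simp [Tm.vars])
          obtain ⟨hgG, m, hm, hlink⟩ := hg x hxw
          have hgrnd : (g x).Ground := Gset_ground hgG
          have hcomp : StepsN R (m + ks i) ((g x).subst Tm.var) ((us i).subst θ) := by
            rw [subst_var]
            refine hlink.trans ?_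
            have h1 := hsteps' i
            rw [hws] at h1
            exact h1
          obtain ⟨θi, hθi, hstepsi⟩ := IHs (tsize (us i)) hsize' (m + ks i) 0
            (by have := hks i; omega) (g x) Tm.var Tm.var
            (fun x' hx' => absurd hx' (by
              rw [ground_iff_vars.1 hgrnd]; exact Set.notMem_empty x'))
            (not_var_of_ground hgrnd) l₂ r₂ (pos ++ [(i : ℕ)]) (us i) θ h2
            hposchild husnv (le_refl _) (Or.inl hgG) hcomp
          refine ⟨θi, ?_, ?_⟩
          · intro x' hx'
            obtain ⟨hθiG, m', hm', hl'⟩ := hθi x' hx'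
            exact ⟨hθiG, m', by omega, hl'⟩
          · rw [hws]
            show Steps R ((Tm.var x).subst g) ((us i).subst θi)
            have hgoal : (Tm.var x).subst g = (g x).subst Tm.var := by rw [subst_var]; rfl
            rw [hgoal]
            exact hstepsi
        · have hwsnv : ¬ IsVarTm (ws i) := by rw [hws]; exact not_isVar_app
          have hmode' : ws i ∈ Gset R L ∨ ∃ l₁ r₁ α₀ β₀ γ, (l₁, r₁) ∈ R ∧
              pos ++ [(i : ℕ)] = β₀ ++ γ ∧ (α₀ = [] ∨ β₀ = []) ∧
              r₁.subAt (α₀ ++ γ) = some (ws i) ∧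
              (∀ δ', δ' <+: γ → δ' ≠ γ → ∃ (h : σ) (cs3 ds3 : Fin (ar h) → Tm σ ar),
                r₁.subAt (α₀ ++ δ') = some (Tm.app h cs3) ∧
                l₂.subAt (β₀ ++ δ') = some (Tm.app h ds3)) := by
            rcases hmode with hmodeB | ⟨l₁, r₁, α₀, β₀, γ, h1, hposeq, hleg, hw, hspγ⟩
            · exact Or.inl (Gset_subAt hmodeB (subAt_child i))
            · refine Or.inr ⟨l₁, r₁, α₀, β₀, γ ++ [(i : ℕ)], h1, ?_, hleg, ?_, ?_⟩
              · rw [hposeq, List.append_assoc]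
              · rw [← List.append_assoc]
                exact subAt_append_child hw i
              · intro δ' hpre' hne'
                rcases prefix_snoc_cases hpre' with hcp | hcp
                · by_cases hcγ : δ' = γ
                  · subst hcγ
                    refine ⟨fu, ws, us, hw, ?_⟩
                    rw [← hposeq]
                    exact hpos
                  · exact hspγ δ' hcp hcγ
                · exact absurd hcp hne'
          obtain ⟨θi, hθi, hstepsi⟩ := IHs (tsize (us i)) hsize' (ks i) mlink
            (by have := hks i; omega) (ws i) g θ'
            (fun x hx => hg x (vars_app_mem (f := fu) (ts := ws) (i := i) hx)) hwsnv
            l₂ r₂ (pos ++ [(i : ℕ)]) (us i) θ h2 hposchild husnv (le_refl _)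
            hmode' (hsteps' i)
          exact ⟨θi, hθi, hstepsi⟩
    -- assemble
    choose θis hspec using hchild
    have hlin : (Tm.app fu us).Linear := linear_subAt (hll (l₂, r₂) h2) hpos
    set θh : ℕ → Tm σ ar := fun x =>
      if hx : ∃ i, x ∈ (us i).vars then θis hx.choose x else Tm.var x with hθh
    have hsub : ∀ i, (us i).subst θh = (us i).subst (θis i) := by
      intro i
      apply subst_congr
      intro x hx
      have hex : ∃ i', x ∈ (us i').vars := ⟨i, hx⟩
      simp only [hθh, dif_pos hex]
      have := linear_app_child_eq hlin hex.choose_spec hx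
      rw [this]
    refine ⟨θh, ?_, ?_⟩
    · intro x hx
      obtain ⟨i, hxi⟩ := Set.mem_iUnion.1 hx
      have hex : ∃ i', x ∈ (us i').vars := ⟨i, hxi⟩
      have hxeq : θh x = θis i x := by
        simp only [hθh, dif_pos hex]
        have := linear_app_child_eq hlin hex.choose_spec hxi
        rw [this]
      rw [hxeq]
      exact (hspec i).1 x hxi
    · show Steps R (Tm.app fu (fun i => (ws i).subst g)) ((Tm.app fu us).subst θh)
      have : (Tm.app fu us).subst θh = Tm.app fu (fun i => (us i).subst (θis i)) := by
        show Tm.app fu (fun i => (us i).subst θh) = _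
        congr 1
        funext i
        exact hsub i
      rw [this]
      exact steps_app_congr (fun i => (hspec i).2)
  · -- a root step happened: takeover
    have hν₁ : j + mlink < ν := by omega
    obtain ⟨gh, hgh, hsteps1⟩ := IHν (j + mlink) hν₁ (tsize l') j mlink (le_refl _)
      (Tm.app fw ws) g θ' hg hwnv l' r' [] l' τ hl'r' (subAt_nil l')
      (hgsm.1 (l', r') hl'r') (le_refl _)
      (by
        rcases hmode with hmodeB | ⟨l₁, r₁, α₀, β₀, γ, h1, hposeq, hleg, hw, hspγ⟩
        · exact Or.inl hmodeB
        · refine Or.inr ⟨l₁, r₁, α₀ ++ γ, [], [], h1, rfl, Or.inr rfl, ?_, ?_⟩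
          · rw [List.append_nil]; exact hw
          · intro δ' hpre' hne'
            rw [List.prefix_nil] at hpre'
            exact absurd hpre' hne')
      hpre
    cases r' with
    | var y =>
        have hyl' : y ∈ l'.vars := hR.2 (l', Tm.var y) hl'r' (by simp [Tm.vars])
        obtain ⟨hghG, m, hm, hlink⟩ := hgh y hyl'
        have hgrnd : (gh y).Ground := Gset_ground hghG
        have hcomp : StepsN R (m + k') ((gh y).subst Tm.var) ((Tm.app fu us).subst θ) := by
          rw [subst_var]
          exact hlink.trans (nr_stepsN hsuf)
        have hν₃ : m + k' + 0 < ν := by omega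
        obtain ⟨θh, hθh, hstepsh⟩ := IHν (m + k') (by omega) (tsize (Tm.app fu us))
          (m + k') 0 (le_refl _) (gh y) Tm.var Tm.var
          (fun x' hx' => absurd hx' (by
            rw [ground_iff_vars.1 hgrnd]; exact Set.notMem_empty x'))
          (not_var_of_ground hgrnd) l₂ r₂ pos (Tm.app fu us) θ h2 hpos hunv (le_refl _)
          (Or.inl hghG) hcomp
        refine ⟨θh, ?_, ?_⟩
        · intro x hx
          obtain ⟨hθhG, m', hm', hl'2⟩ := hθh x hx
          exact ⟨hθhG, m', by omega, hl'2⟩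
        · refine hsteps1.trans ?_
          refine (Relation.ReflTransGen.single (Step.rule gh hl'r')).trans ?_
          have he : (gh y).subst Tm.var = gh y := subst_var _
          rw [he] at hstepsh
          exact hstepsh
    | app fr rs =>
        have hν₂ : k' + (j + mlink) < ν := by omega
        obtain ⟨θh, hθh, hstepsh⟩ := IHν (k' + (j + mlink)) hν₂ (tsize (Tm.app fu us))
          k' (j + mlink) (le_refl _) (Tm.app fr rs) gh τ
          (fun x hx => hgh x (hR.2 (l', Tm.app fr rs) hl'r' hx)) not_isVar_app
          l₂ r₂ pos (Tm.app fu us) θ h2 hpos hunv (le_refl _)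
          (Or.inr ⟨l', Tm.app fr rs, [], pos, [], hl'r', (List.append_nil pos).symm,
            Or.inl rfl, subAt_nil _, by
              intro δ' hpre' hne'
              rw [List.prefix_nil] at hpre'
              exact absurd hpre' hne'⟩)
          (nr_stepsN hsuf)
        refine ⟨θh, ?_, ?_⟩
        · intro x hx
          obtain ⟨hθhG, m', hm', hl'2⟩ := hθh x hx
          exact ⟨hθhG, m', by omega, hl'2⟩
        · refine hsteps1.trans ?_
          exact (Relation.ReflTransGen.single (Step.rule gh hl'r')).trans hstepsh

/-! ### The factorization lemma -/

theorem Fmain {R : Set (Tm σ ar × Tm σ ar)} {L : Set (Tm σ ar)}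
    (hR : IsTRS R) (hll : LeftLinearTRS R) (hgsm : GSM R) :
    ∀ (n : ℕ) (t : Tm σ ar), t ∈ Tset R L →
    ∀ (f : σ) (ps : Fin (ar f) → Tm σ ar), StepsN R n t (Tm.app f ps) →
    ∃ ts : Fin (ar f) → Tm σ ar,
      (∀ i, ts i ∈ Tset R L ∧ Steps R (ts i) (ps i)) ∧ Steps R t (Tm.app f ts) := by
  intro n
  induction n using Nat.strong_induction_on with
  | _ n IHn =>
  intro t ht f ps hder
  have main : ∀ (w : Tm σ ar) (g : ℕ → Tm σ ar), WOK R L w →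
      (∀ x ∈ w.vars, g x ∈ Gset R L) → ¬ IsVarTm w →
      StepsN R n (w.subst g) (Tm.app f ps) →
      ∃ ts : Fin (ar f) → Tm σ ar,
        (∀ i, ts i ∈ Tset R L ∧ Steps R (ts i) (ps i)) ∧
        Steps R (w.subst g) (Tm.app f ts) := by
    intro w g hwok hgG hwnv hder'
    rcases tm_shape w with ⟨x, rfl⟩ | ⟨fw, ws, rfl⟩
    · exact absurd ⟨x, rfl⟩ hwnv
    rcases split_last_root hder' with hnr | ⟨j, k', l', r', τ, hl'r', hjk, hpre, hsuf⟩
    · -- no root step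
      have hnr' : NR R n (Tm.app fw (fun i => (ws i).subst g)) (Tm.app f ps) := hnr
      obtain ⟨bs, ks, hb, hsteps, hks⟩ := nr_decompose hnr'
      injection hb with hf hb2
      subst hf
      have hb3 : ps = bs := eq_of_heq hb2
      subst hb3
      refine ⟨fun i => (ws i).subst g, ?_, ?_⟩
      · intro i
        constructor
        · refine ⟨ws i, g, ?_, fun x hx => hgG x (vars_app_mem (i := i) hx), rfl⟩
          rcases hwok with ⟨lr, hlr, p, hp⟩ | hG
          · exact Or.inl ⟨lr, hlr, p ++ [(i : ℕ)], subAt_append_child hp i⟩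
          · exact Or.inr (Gset_subAt hG (subAt_child i))
        · exact stepsN_steps (hsteps i)
      · exact Relation.ReflTransGen.refl
    · -- root step: consume the prefix
      obtain ⟨gh, hgh, hsteps1⟩ := Cmain hR hll hgsm j (tsize l') j 0 (by omega)
        (Tm.app fw ws) g g
        (fun x hx => ⟨hgG x hx, 0, le_refl 0, StepsN.refl _⟩) hwnv
        l' r' [] l' τ hl'r' (subAt_nil l') (hgsm.1 (l', r') hl'r') (le_refl _)
        (by
          rcases hwok with ⟨lr, hlr, p, hp⟩ | hG
          · refine Or.inr ⟨lr.1, lr.2, p, [], [], hlr, rfl, Or.inr rfl, ?_, ?_⟩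
            · rw [List.append_nil]; exact hp
            · intro δ' hpre' hne'
              rw [List.prefix_nil] at hpre'
              exact absurd hpre' hne'
          · exact Or.inl hG)
        hpre
      rcases tm_shape r' with ⟨y, rfl⟩ | ⟨fr, rs, rfl⟩
      · -- collapsing rule
        have hyl' : y ∈ l'.vars := hR.2 (l', Tm.var y) hl'r' (by simp [Tm.vars])
        obtain ⟨hG, m, hm, hlink⟩ := hgh y hyl'
        have hcomp : StepsN R (m + k') (gh y) (Tm.app f ps) :=
          hlink.trans (nr_stepsN hsuf)
        obtain ⟨ts, h1, h2⟩ := IHn (m + k') (by omega) (gh y)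
          (Gset_subset_Tset hG) f ps hcomp
        refine ⟨ts, h1, ?_⟩
        refine hsteps1.trans ?_
        refine (Relation.ReflTransGen.single (Step.rule gh hl'r')).trans ?_
        exact h2
      · -- the rule exposes the root symbol
        have hnr' : NR R k' (Tm.app fr (fun i => (rs i).subst τ)) (Tm.app f ps) := hsuf
        obtain ⟨bs, ks, hb, hsteps, hks⟩ := nr_decompose hnr'
        injection hb with hf hb2
        subst hf
        have hb3 : ps = bs := eq_of_heq hb2
        subst hb3
        refine ⟨fun i => (rs i).subst gh, ?_, ?_⟩
        · intro i
          constructor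
          · refine ⟨rs i, gh, ?_, ?_, rfl⟩
            · exact Or.inl ⟨(l', Tm.app f rs), hl'r', [(i : ℕ)], subAt_child i⟩
            · intro x hx
              have hxl' : x ∈ l'.vars :=
                hR.2 (l', Tm.app f rs) hl'r' (vars_app_mem (i := i) hx)
              exact (hgh x hxl').1
          · refine Relation.ReflTransGen.trans ?_ (stepsN_steps (hsteps i))
            apply steps_subst_mono
            intro x hx
            have hxl' : x ∈ l'.vars :=
              hR.2 (l', Tm.app f rs) hl'r' (vars_app_mem (i := i) hx)
            obtain ⟨_, m, _, hlink⟩ := hgh x hxl'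
            exact stepsN_steps hlink
        · refine hsteps1.trans ?_
          exact Relation.ReflTransGen.single (Step.rule gh hl'r')
  obtain ⟨w, g, hwok, hgG, rfl⟩ := ht
  rcases tm_shape w with ⟨x, rfl⟩ | ⟨fw, ws, rfl⟩
  · have hgx : g x ∈ Gset R L := hgG x (by simp [Tm.vars])
    have hder'' : StepsN R n ((g x).subst Tm.var) (Tm.app f ps) := by
      rw [subst_var]; exact hder
    have hres := main (g x) Tm.var (Or.inr hgx)
      (fun x' hx' => absurd hx' (by
        rw [ground_iff_vars.1 (Gset_ground hgx)]; exact Set.notMem_empty x'))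
      (not_var_of_ground (Gset_ground hgx)) hder''
    obtain ⟨ts, h1, h2⟩ := hres
    refine ⟨ts, h1, ?_⟩
    have he : (g x).subst Tm.var = g x := subst_var _
    rw [he] at h2
    exact h2
  · exact main (Tm.app fw ws) g hwok hgG not_isVar_app hder

end GSMAux

theorem stmt_7 {σ : Type} {ar : σ → ℕ} [Finite σ]
    (R : Set (Tm σ ar × Tm σ ar)) (hR : IsTRS R)
    (hll : LeftLinearTRS R) (hgsm : GSM R)
    (L : Set (Tm σ ar)) (hfin : L.Finite) (hground : ∀ t ∈ L, t.Ground) :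
    Recognizable (Desc R L) := by
  classical
  apply GSMAux.recognizable_of_factor hR.2 (GSMAux.Tset R L)
    (GSMAux.Tset_finite hR.1 hfin)
    (fun t ht => GSMAux.Gset_subset_Tset (GSMAux.L_subset_Gset hground ht))
    hground
  intro t ht f ps hsteps
  obtain ⟨n, hn⟩ := GSMAux.steps_iff_stepsN.1 hsteps
  exact GSMAux.Fmain hR hll hgsm n t ht f ps hn
end

section
/- Let R be a TRS over sign(R), let Σ = {f, ♯} ∪ sign(R) with f a fresh binary symbol and ♯ a fresh constant, and let Γ be a ranked alphabet with sign(R) ⊆ Γ. Number the symbols of Γ − sign(R) from 1 to |Γ − sign(R)|, and to each g ∈ Γ − sign(R) of arity k with number l assign t_g = f(left_k, right_l), where right₀ = ♯, right_{n+1} = f(♯, right_n), left₀ = ♯, left_{n+1} = f(left_n, x_{n+1}). Let S = {g(x₁,…,x_k) → t_g : k ≥ 0, g ∈ Γ_k − sign(R)}. Then S is a convergent TRS, and for all r, s ∈ T_Γ: r →_R s if and only if r↓_S →_R s↓_S. -/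
set_option autoImplicit false

/-! ### Extending an alphabet by a fresh binary symbol `f` and a fresh
constant `♯`: the alphabet `γ ⊕ Bool`, where `Sum.inr true` is `f` (arity 2)
and `Sum.inr false` is `♯` (arity 0). -/

/-- Arity function of `Σ = {f, ♯} ∪ Γ`. -/
def arExt {γ : Type} (arγ : γ → ℕ) : γ ⊕ Bool → ℕ :=
  Sum.elim arγ fun b => cond b 2 0

/-! ### The comb construction (used in Statements 9 and 10).
`Γ` is a ranked alphabet containing `sign(R)` (via the injection `ι`), and
`Γ ∪ {f, ♯}` is modelled by `γ ⊕ Bool` with `arExt`. -/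

section Comb

variable {γ : Type} {arγ : γ → ℕ}

/-- the fresh constant `♯` -/
def shE : Tm (γ ⊕ Bool) (arExt arγ) := .app (Sum.inr false) ![]

/-- `f(a, b)` for the fresh binary symbol `f` -/
def fE (a b : Tm (γ ⊕ Bool) (arExt arγ)) : Tm (γ ⊕ Bool) (arExt arγ) :=
  .app (Sum.inr true) ![a, b]

/-- the right combs: `right₀ = ♯`, `right_{n+1} = f(♯, right_n)` -/
def rightCombE : ℕ → Tm (γ ⊕ Bool) (arExt arγ)
  | 0 => shE
  | n + 1 => fE shE (rightCombE n)

/-- the left combs: `left₀ = ♯`, `left_{n+1} = f(left_n, x_{n+1})`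
(recall `Tm.var n` is the variable `x_{n+1}`) -/
def leftCombE : ℕ → Tm (γ ⊕ Bool) (arExt arγ)
  | 0 => shE
  | n + 1 => fE (leftCombE n) (.var n)

/-- The TRS `S = { g(x₁,…,x_k) → t_g : g ∈ Γ − sign(R) of arity k }`,
where `t_g = f(left_k, right_{num g})`. -/
def combTRS (ι : γ → Prop) (num : γ → ℕ) :
    Set (Tm (γ ⊕ Bool) (arExt arγ) × Tm (γ ⊕ Bool) (arExt arγ)) :=
  {p | ∃ g : γ, ¬ ι g ∧
    p = (Tm.app (Sum.inl g) fun i => Tm.var (i : Fin (arγ g)).1,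
         fE (leftCombE (arγ g)) (rightCombE (num g)))}

end Comb

/-! ### Statement 9: `S` is convergent and `r →_R s ↔ r↓_S →_R s↓_S`. -/
section StmtNine

attribute [local instance] Classical.propDecidable
set_option linter.unusedVariables false

variable {σ γ : Type} {ar : σ → ℕ} {arγ : γ → ℕ}

lemma app_inj {f : σ} {ts ts' : Fin (ar f) → Tm σ ar}
    (h : Tm.app f ts = Tm.app f ts') : ts = ts' := by
  injection h with h1 h2

lemma app_inj2 {f f' : σ} {ts : Fin (ar f) → Tm σ ar} {ts' : Fin (ar f') → Tm σ ar}
    (h : Tm.app f ts = Tm.app f' ts') : ∃ hf : f = f', HEq ts ts' := by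
  injection h with h1 h2
  exact ⟨h1, h2⟩

lemma fin2_all {P : Fin 2 → Prop} (h0 : P 0) (h1 : P 1) : ∀ i, P i :=
  Fin.forall_fin_two.2 ⟨h0, h1⟩

lemma fin2_ext {α : Type*} {v w : Fin 2 → α} (h0 : v 0 = w 0) (h1 : v 1 = w 1) : v = w :=
  funext (fin2_all h0 h1)

lemma fE_inj {a b c d : Tm (γ ⊕ Bool) (arExt arγ)} (h : fE a b = fE c d) :
    a = c ∧ b = d := by
  have h' := app_inj (ar := arExt arγ) (f := Sum.inr true) h
  exact ⟨congrFun h' 0, congrFun h' 1⟩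

lemma subst_fE (θ : ℕ → Tm (γ ⊕ Bool) (arExt arγ)) (a b : Tm (γ ⊕ Bool) (arExt arγ)) :
    (fE a b).subst θ = fE (a.subst θ) (b.subst θ) := by
  show Tm.app _ _ = Tm.app _ _
  congr 1
  exact funext (fin2_all rfl rfl)

lemma subst_shE (θ : ℕ → Tm (γ ⊕ Bool) (arExt arγ)) : (shE (arγ := arγ)).subst θ = shE := by
  show Tm.app _ _ = Tm.app _ _
  congr 1
  funext i
  exact i.elim0

lemma subst_rightComb (θ : ℕ → Tm (γ ⊕ Bool) (arExt arγ)) (n : ℕ) :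
    (rightCombE (arγ := arγ) n).subst θ = rightCombE n := by
  induction n with
  | zero => exact subst_shE θ
  | succ n ih => rw [rightCombE, subst_fE, subst_shE, ih]

lemma subst_eqOn {t : Tm σ ar} {θ θ' : ℕ → Tm σ ar}
    (h : ∀ n ∈ t.vars, θ n = θ' n) : t.subst θ = t.subst θ' := by
  induction t with
  | var n => exact h n rfl
  | app f ts ih =>
    show Tm.app _ _ = Tm.app _ _
    congr 1
    funext i
    exact ih i fun n hn => h n (Set.mem_iUnion.2 ⟨i, hn⟩)

lemma vars_fE (a b : Tm (γ ⊕ Bool) (arExt arγ)) (n : ℕ) :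
    n ∈ (fE a b).vars ↔ n ∈ a.vars ∨ n ∈ b.vars := by
  constructor
  · intro hn
    obtain ⟨i, hi⟩ := Set.mem_iUnion.1 hn
    revert hi
    revert i
    exact fin2_all (fun h => Or.inl h) (fun h => Or.inr h)
  · rintro (h | h)
    · exact Set.mem_iUnion.2 ⟨(0 : Fin 2), h⟩
    · exact Set.mem_iUnion.2 ⟨(1 : Fin 2), h⟩

lemma vars_shE (n : ℕ) : n ∉ (shE (arγ := arγ)).vars := by
  intro hn
  obtain ⟨i, -⟩ := Set.mem_iUnion.1 hn
  exact i.elim0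

lemma vars_rightComb (n m : ℕ) : m ∉ (rightCombE (arγ := arγ) n).vars := by
  induction n with
  | zero => exact vars_shE m
  | succ n ih =>
    intro hm
    rcases (vars_fE _ _ m).1 hm with h | h
    · exact vars_shE m h
    · exact ih h

lemma vars_leftComb (k : ℕ) (n : ℕ) : n ∈ (leftCombE (arγ := arγ) k).vars ↔ n < k := by
  induction k with
  | zero => simp [leftCombE]; exact fun h => vars_shE n h
  | succ k ih =>
    rw [leftCombE, vars_fE, ih]
    constructor
    · rintro (h | h)
      · exact Nat.lt_succ_of_lt h
      · rw [show (Tm.var k : Tm (γ ⊕ Bool) (arExt arγ)).vars = {k} from rfl] at h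
        rw [h]; exact Nat.lt_succ_self k
    · intro h
      rcases Nat.lt_succ_iff_lt_or_eq.1 h with h | h
      · exact Or.inl h
      · exact Or.inr (by rw [show (Tm.var k : Tm (γ ⊕ Bool) (arExt arγ)).vars = {k} from rfl]; exact h)

end StmtNine
section StmtNine2

attribute [local instance] Classical.propDecidable
set_option linter.unusedVariables false

variable {σ γ : Type} {ar : σ → ℕ} {arγ : γ → ℕ}

/-- padding of a finite vector of terms into a substitution -/
def pad {σ' : Type} {ar' : σ' → ℕ} {k : ℕ} (v : Fin k → Tm σ' ar') : ℕ → Tm σ' ar' :=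
  fun n => if h : n < k then v ⟨n, h⟩ else .var n

lemma pad_eta {k : ℕ} (v : Fin k → Tm (γ ⊕ Bool) (arExt arγ)) :
    (fun i : Fin k => pad v i.1) = v := by
  funext i
  simp only [pad, i.2, dif_pos, Fin.eta]

/-- left-hand side of the `S`-rule for `g` -/
def lhsg (g : γ) : Tm (γ ⊕ Bool) (arExt arγ) :=
  Tm.app (Sum.inl g) fun i => Tm.var (i : Fin (arγ g)).1

/-- right-hand side of the `S`-rule for `g` -/
def tg (num : γ → ℕ) (g : γ) : Tm (γ ⊕ Bool) (arExt arγ) :=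
  fE (leftCombE (arγ g)) (rightCombE (num g))

lemma mem_combTRS {P : γ → Prop} {num : γ → ℕ} {l r : Tm (γ ⊕ Bool) (arExt arγ)} :
    (l, r) ∈ combTRS P num ↔ ∃ g, ¬ P g ∧ l = lhsg g ∧ r = tg num g := by
  simp [combTRS, lhsg, tg, Prod.ext_iff]

lemma subst_lhsg (θ : ℕ → Tm (γ ⊕ Bool) (arExt arγ)) (g : γ) :
    (lhsg g).subst θ = Tm.app (Sum.inl g) (fun i : Fin (arγ g) => θ i.1) := rfl

/-- the `S`-normal form function -/
noncomputable def nf (P : γ → Prop) (num : γ → ℕ) :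
    Tm (γ ⊕ Bool) (arExt arγ) → Tm (γ ⊕ Bool) (arExt arγ)
  | .var n => .var n
  | .app (Sum.inl g) ts =>
      if P g then .app (Sum.inl g) fun i => nf P num (ts i)
      else (tg num g).subst (pad fun i : Fin (arγ g) => nf P num (ts i))
  | .app (Sum.inr b) ts => .app (Sum.inr b) fun i => nf P num (ts i)

/-- the encoding of a `Γ`-term -/
noncomputable def enc (P : γ → Prop) (num : γ → ℕ) : Tm γ arγ → Tm (γ ⊕ Bool) (arExt arγ)
  | .var n => .var n
  | .app g ts =>
      if P g then .app (Sum.inl g) fun i : Fin (arγ g) => enc P num (ts i)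
      else (tg num g).subst (pad fun i : Fin (arγ g) => enc P num (ts i))

lemma nf_var (P : γ → Prop) (num : γ → ℕ) (n : ℕ) : nf (arγ := arγ) P num (.var n) = .var n := rfl

lemma nf_inl (P : γ → Prop) (num : γ → ℕ) (g : γ) (ts : Fin (arExt arγ (Sum.inl g)) → Tm (γ ⊕ Bool) (arExt arγ)) :
    nf P num (.app (Sum.inl g) ts) =
      if P g then .app (Sum.inl g) fun i => nf P num (ts i)
      else (tg num g).subst (pad fun i : Fin (arγ g) => nf P num (ts i)) := rfl

lemma nf_inr (P : γ → Prop) (num : γ → ℕ) (b : Bool) (ts : Fin (arExt arγ (Sum.inr b)) → Tm (γ ⊕ Bool) (arExt arγ)) :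
    nf P num (.app (Sum.inr b) ts) = .app (Sum.inr b) fun i => nf P num (ts i) := rfl

lemma enc_var (P : γ → Prop) (num : γ → ℕ) (n : ℕ) : enc (arγ := arγ) P num (.var n) = .var n := rfl

lemma enc_app (P : γ → Prop) (num : γ → ℕ) (g : γ) (ts : Fin (arγ g) → Tm γ arγ) :
    enc P num (.app g ts) =
      if P g then .app (Sum.inl g) fun i : Fin (arγ g) => enc P num (ts i)
      else (tg num g).subst (pad fun i : Fin (arγ g) => enc P num (ts i)) := rfl

/-- terms with no symbol from `γ` -/
def NoL : Tm (γ ⊕ Bool) (arExt arγ) → Prop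
  | .var _ => True
  | .app (Sum.inl _) _ => False
  | .app (Sum.inr _) ts => ∀ i, NoL (ts i)

/-- terms with no "bad" symbol -/
def NoBad (P : γ → Prop) : Tm (γ ⊕ Bool) (arExt arγ) → Prop
  | .var _ => True
  | .app (Sum.inl g) ts => P g ∧ ∀ i, NoBad P (ts i)
  | .app (Sum.inr _) ts => ∀ i, NoBad P (ts i)

lemma noL_shE : NoL (shE (arγ := arγ)) := fun i => i.elim0

lemma noL_fE {a b : Tm (γ ⊕ Bool) (arExt arγ)} (ha : NoL a) (hb : NoL b) : NoL (fE a b) :=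
  fin2_all (P := fun i => NoL (![a, b] i)) ha hb

lemma noL_rightComb (n : ℕ) : NoL (rightCombE (arγ := arγ) n) := by
  induction n with
  | zero => exact noL_shE
  | succ n ih => exact noL_fE noL_shE ih

lemma noL_leftComb (k : ℕ) : NoL (leftCombE (arγ := arγ) k) := by
  induction k with
  | zero => exact noL_shE
  | succ k ih => exact noL_fE ih trivial

lemma noL_tg (num : γ → ℕ) (g : γ) : NoL (tg (arγ := arγ) num g) :=
  noL_fE (noL_leftComb _) (noL_rightComb _)

lemma nf_subst_noL (P : γ → Prop) (num : γ → ℕ) {t : Tm (γ ⊕ Bool) (arExt arγ)}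
    (ht : NoL t) (θ : ℕ → Tm (γ ⊕ Bool) (arExt arγ)) :
    nf P num (t.subst θ) = t.subst (fun n => nf P num (θ n)) := by
  induction t with
  | var n => rfl
  | app f ts ih =>
    match f with
    | Sum.inl g => exact absurd ht id
    | Sum.inr b =>
      show nf P num (.app (Sum.inr b) _) = Tm.app (Sum.inr b) _
      rw [nf_inr]
      congr 1
      funext i
      exact ih i (ht i)

/-- generic inversion of a rewriting step -/
lemma step_inv {σ' : Type} {ar' : σ' → ℕ} {Q : Set (Tm σ' ar' × Tm σ' ar')} {t u : Tm σ' ar'}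
    (h : Step Q t u) :
    (∃ (l r : Tm σ' ar') (θ : ℕ → Tm σ' ar'), (l, r) ∈ Q ∧ t = l.subst θ ∧ u = r.subst θ) ∨
    (∃ (f : σ') (ts : Fin (ar' f) → Tm σ' ar') (i : Fin (ar' f)) (t' : Tm σ' ar'),
      Step Q (ts i) t' ∧ t = .app f ts ∧ u = .app f (Function.update ts i t')) := by
  cases h with
  | rule θ hm => exact .inl ⟨_, _, θ, hm, rfl, rfl⟩
  | congr i hs => exact .inr ⟨_, _, i, _, hs, rfl, rfl⟩

end StmtNine2
section StmtNine3

attribute [local instance] Classical.propDecidable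
set_option linter.unusedVariables false

variable {σ γ : Type} {ar : σ → ℕ} {arγ : γ → ℕ}

lemma vars_tg (num : γ → ℕ) (g : γ) {n : ℕ} (hn : n ∈ (tg (arγ := arγ) num g).vars) :
    n < arγ g := by
  rcases (vars_fE _ _ n).1 hn with h | h
  · exact (vars_leftComb _ n).1 h
  · exact absurd h (vars_rightComb _ n)

/-- one `S`-step does not change the `S`-normal form -/
lemma comp_update {α β : Type*} {n : ℕ} (F : α → β) (ts : Fin n → α) (i : Fin n) (t' : α)
    (h : F (ts i) = F t') :
    (fun j => F (Function.update ts i t' j)) = fun j => F (ts j) := by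
  funext j
  rcases eq_or_ne j i with rfl | hji
  · rw [Function.update_self]; exact h.symm
  · rw [Function.update_of_ne hji]

lemma step_nf (P : γ → Prop) (num : γ → ℕ) {t u : Tm (γ ⊕ Bool) (arExt arγ)}
    (h : Step (combTRS P num) t u) : nf P num t = nf P num u := by
  induction h with
  | rule θ hm =>
    rename_i l r
    obtain ⟨g, hg, hl, hr⟩ := mem_combTRS.1 hm
    subst hl hr
    rw [subst_lhsg, nf_inl P num g (fun i : Fin (arγ g) => θ i.1), if_neg hg, nf_subst_noL P num (noL_tg num g)]
    refine subst_eqOn fun n hn => ?_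
    have hk := vars_tg num g hn
    simp only [pad, hk, dif_pos]
  | congr i hs ih =>
    rename_i f ts t'
    have hup := comp_update (nf P num) ts i t' ih
    match f with
    | Sum.inl g =>
      rw [nf_inl, nf_inl]
      by_cases hg : P g
      · rw [if_pos hg, if_pos hg, hup]
      · rw [if_neg hg, if_neg hg]
        have hup2 : (fun j : Fin (arγ g) => nf P num (Function.update ts i t' j)) =
            fun j : Fin (arγ g) => nf P num (ts j) := funext fun j => congrFun hup j
        rw [hup2]
    | Sum.inr b =>
      rw [nf_inr, nf_inr, hup]

lemma steps_nf (P : γ → Prop) (num : γ → ℕ) {t u : Tm (γ ⊕ Bool) (arExt arγ)}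
    (h : Steps (combTRS P num) t u) : nf P num t = nf P num u := by
  induction h with
  | refl => rfl
  | tail _ hstep ih => exact ih.trans (step_nf P num hstep)

lemma steps_congr_one {σ' : Type} {ar' : σ' → ℕ} {Q : Set (Tm σ' ar' × Tm σ' ar')}
    {f : σ'} {ts : Fin (ar' f) → Tm σ' ar'} {i : Fin (ar' f)} {u : Tm σ' ar'}
    (h : Steps Q (ts i) u) :
    Steps Q (.app f ts) (.app f (Function.update ts i u)) := by
  have key : ∀ a b : Tm σ' ar', Step Q a b →
      Step Q (Tm.app f (Function.update ts i a)) (Tm.app f (Function.update ts i b)) := by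
    intro a b hab
    have := Step.congr (ts := Function.update ts i a) i
      (t' := b) (by rw [Function.update_self]; exact hab)
    rwa [Function.update_idem] at this
  have h2 := Relation.ReflTransGen.lift (fun x => Tm.app f (Function.update ts i x)) key _ _ h
  simpa [Function.onFun, Steps] using h2

lemma steps_app {σ' : Type} {ar' : σ' → ℕ} {Q : Set (Tm σ' ar' × Tm σ' ar')}
    {f : σ'} {ts us : Fin (ar' f) → Tm σ' ar'} (h : ∀ i, Steps Q (ts i) (us i)) :
    Steps Q (.app f ts) (.app f us) := by
  have key : ∀ s : Finset (Fin (ar' f)),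
      Steps Q (.app f ts) (.app f (fun i => if i ∈ s then us i else ts i)) := by
    intro s
    induction s using Finset.induction_on with
    | empty => simp only [Finset.notMem_empty, if_false]; exact Relation.ReflTransGen.refl
    | @insert j s hj ih =>
      refine ih.trans ?_
      have hstep : Steps Q ((fun i => if i ∈ s then us i else ts i) j) (us j) := by
        simp only [hj, if_false]; exact h j
      have := steps_congr_one (Q := Q) (f := f) (ts := fun i => if i ∈ s then us i else ts i) (i := j) (u := us j) hstep
      unfold Steps at this
      convert this using 2
      funext i
      rcases eq_or_ne i j with rfl | hij
      · simp [Function.update_self]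
      · simp [Function.update_of_ne hij, Finset.mem_insert, hij]
  have := key Finset.univ
  simpa using this

lemma steps_to_nf (P : γ → Prop) (num : γ → ℕ) (t : Tm (γ ⊕ Bool) (arExt arγ)) :
    Steps (combTRS P num) t (nf P num t) := by
  induction t with
  | var n => exact Relation.ReflTransGen.refl
  | app f ts ih =>
    have h1 : Steps (combTRS P num) (.app f ts) (.app f fun i => nf P num (ts i)) :=
      steps_app ih
    match f with
    | Sum.inl g =>
      by_cases hg : P g
      · rw [nf_inl, if_pos hg]; exact h1
      · refine h1.trans (Relation.ReflTransGen.single ?_)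
        rw [nf_inl, if_neg hg]
        have hmem : (lhsg (arγ := arγ) g, tg num g) ∈ combTRS (arγ := arγ) P num := mem_combTRS.2 ⟨g, hg, rfl, rfl⟩
        have hstep := Step.rule (pad fun i : Fin (arγ g) => nf P num (ts i)) hmem
        rwa [subst_lhsg, pad_eta] at hstep
    | Sum.inr b => rw [nf_inr]; exact h1

lemma confluent_comb (P : γ → Prop) (num : γ → ℕ) :
    Confluent (combTRS (arγ := arγ) P num) := by
  intro a b c hab hac
  refine ⟨nf P num a, ?_, ?_⟩
  · rw [steps_nf P num hab]; exact steps_to_nf P num b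
  · rw [steps_nf P num hac]; exact steps_to_nf P num c

lemma noBad_nf_eq (P : γ → Prop) (num : γ → ℕ) {t : Tm (γ ⊕ Bool) (arExt arγ)}
    (ht : NoBad P t) : nf P num t = t := by
  induction t with
  | var n => rfl
  | app f ts ih =>
    match f with
    | Sum.inl g =>
      rw [nf_inl, if_pos ht.1]
      congr 1
      funext i
      exact ih i (ht.2 i)
    | Sum.inr b =>
      rw [nf_inr]
      congr 1
      funext i
      exact ih i (ht i)

lemma bad_reducible (P : γ → Prop) (num : γ → ℕ) {t : Tm (γ ⊕ Bool) (arExt arγ)}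
    (ht : ¬ NoBad P t) : ∃ u, Step (combTRS P num) t u := by
  induction t with
  | var n => exact absurd trivial ht
  | app f ts ih =>
    match f with
    | Sum.inl g =>
      by_cases hg : P g
      · have : ¬ ∀ i, NoBad P (ts i) := fun hall => ht ⟨hg, hall⟩
        push_neg at this
        obtain ⟨i, hi⟩ := this
        obtain ⟨u, hu⟩ := ih i hi
        exact ⟨_, Step.congr i hu⟩
      · have hmem : (lhsg (arγ := arγ) g, tg num g) ∈ combTRS (arγ := arγ) P num := mem_combTRS.2 ⟨g, hg, rfl, rfl⟩
        have hstep := Step.rule (pad ts) hmem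
        erw [subst_lhsg, pad_eta] at hstep
        exact ⟨_, hstep⟩
    | Sum.inr b =>
      have : ¬ ∀ i, NoBad P (ts i) := ht
      push_neg at this
      obtain ⟨i, hi⟩ := this
      obtain ⟨u, hu⟩ := ih i hi
      exact ⟨_, Step.congr i hu⟩

/-- a normal form of `t` is exactly `nf t` -/
lemma normalFormOf_eq (P : γ → Prop) (num : γ → ℕ) {t u : Tm (γ ⊕ Bool) (arExt arγ)}
    (h : NormalFormOf (combTRS P num) t u) : u = nf P num t := by
  obtain ⟨hsteps, hirr⟩ := h
  have hnb : NoBad P u := by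
    by_contra hnb
    exact hirr (bad_reducible P num hnb)
  rw [steps_nf P num hsteps, noBad_nf_eq P num hnb]

end StmtNine3
section StmtNine4

attribute [local instance] Classical.propDecidable
set_option linter.unusedVariables false

variable {σ γ : Type} {ar : σ → ℕ} {arγ : γ → ℕ}

/-- weight of a symbol: 1 if bad, 0 otherwise -/
noncomputable def wt (P : γ → Prop) : γ ⊕ Bool → ℕ
  | .inl g => if P g then 0 else 1
  | .inr _ => 0

/-- number of occurrences of bad symbols -/
noncomputable def badCount (P : γ → Prop) : Tm (γ ⊕ Bool) (arExt arγ) → ℕ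
  | .var _ => 0
  | .app f ts => wt P f + ∑ i, badCount P (ts i)

lemma badCount_app (P : γ → Prop) (f : γ ⊕ Bool) (ts : Fin (arExt arγ f) → Tm (γ ⊕ Bool) (arExt arγ)) :
    badCount P (.app f ts) = wt P f + ∑ i, badCount P (ts i) := rfl

lemma badCount_inl (P : γ → Prop) (g : γ) (ts : Fin (arExt arγ (Sum.inl g)) → Tm (γ ⊕ Bool) (arExt arγ)) :
    badCount P (.app (Sum.inl g) ts) =
      (if P g then 0 else 1) + ∑ i : Fin (arγ g), badCount P (ts i) := rfl

lemma badCount_fE (P : γ → Prop) (a b : Tm (γ ⊕ Bool) (arExt arγ)) :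
    badCount P (fE a b) = badCount P a + badCount P b := by
  show wt P (Sum.inr true) + ∑ i : Fin 2, badCount P (![a, b] i) = _
  rw [Fin.sum_univ_two]
  show 0 + (badCount P a + badCount P b) = _
  rw [Nat.zero_add]

lemma badCount_shE (P : γ → Prop) : badCount P (shE (arγ := arγ)) = 0 := by
  show 0 + ∑ i : Fin 0, badCount P (![] i) = 0
  simp

lemma badCount_rightComb (P : γ → Prop) (n : ℕ) :
    badCount P (rightCombE (arγ := arγ) n) = 0 := by
  induction n with
  | zero => exact badCount_shE P
  | succ n ih => rw [rightCombE, badCount_fE, badCount_shE, ih]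

lemma badCount_leftComb (P : γ → Prop) (k : ℕ) (θ : ℕ → Tm (γ ⊕ Bool) (arExt arγ)) :
    badCount P ((leftCombE k).subst θ) = ∑ i ∈ Finset.range k, badCount P (θ i) := by
  induction k with
  | zero => rw [leftCombE, subst_shE, badCount_shE, Finset.sum_range_zero]
  | succ k ih =>
    rw [leftCombE, subst_fE, badCount_fE, ih, Finset.sum_range_succ]
    rfl

lemma step_badCount (P : γ → Prop) (num : γ → ℕ) {t u : Tm (γ ⊕ Bool) (arExt arγ)}
    (h : Step (combTRS P num) t u) : badCount P u < badCount P t := by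
  induction h with
  | rule θ hm =>
    rename_i l r
    obtain ⟨g, hg, hl, hr⟩ := mem_combTRS.1 hm
    subst hl hr
    rw [subst_lhsg, badCount_inl P g (fun i : Fin (arγ g) => θ i.1), if_neg hg]
    rw [show (tg num g).subst θ = fE ((leftCombE (arγ g)).subst θ) (rightCombE (num g)) by
      rw [tg, subst_fE, subst_rightComb]]
    rw [badCount_fE, badCount_rightComb, badCount_leftComb]
    rw [show (∑ i : Fin (arγ g), badCount P (θ i.1)) = ∑ i ∈ Finset.range (arγ g), badCount P (θ i)
      from Fin.sum_univ_eq_sum_range (fun i => badCount P (θ i)) (arγ g)]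
    omega
  | congr i hs ih =>
    rename_i f ts t'
    rw [badCount_app, badCount_app]
    refine Nat.add_lt_add_left ?_ _
    rw [show (fun j => badCount P (Function.update ts i t' j)) =
        Function.update (fun j => badCount P (ts j)) i (badCount P t') from
      funext fun j => Function.apply_update (fun _ => badCount P) ts i t' j]
    rw [Finset.sum_update_of_mem (Finset.mem_univ i), Finset.sdiff_singleton_eq_erase,
      ← Finset.add_sum_erase _ _ (Finset.mem_univ i)]
    exact Nat.add_lt_add_right ih _

lemma terminating_comb (P : γ → Prop) (num : γ → ℕ) :
    Terminating (combTRS (arγ := arγ) P num) := by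
  rintro ⟨f, hf⟩
  have key : ∀ n, badCount P (f n) + n ≤ badCount P (f 0) := by
    intro n
    induction n with
    | zero => omega
    | succ n ih =>
      have := step_badCount P num (hf n)
      omega
  have := key (badCount P (f 0) + 1)
  omega

lemma isTRS_comb [Finite γ] (P : γ → Prop) (num : γ → ℕ) :
    IsTRS (combTRS (arγ := arγ) P num) := by
  constructor
  · have : combTRS (arγ := arγ) P num =
        (fun g => (lhsg (arγ := arγ) g, tg num g)) '' {g | ¬ P g} := by
      ext p
      constructor
      · rintro ⟨g, hg, hp⟩
        exact ⟨g, hg, hp.symm⟩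
      · rintro ⟨g, hg, hp⟩
        exact ⟨g, hg, hp.symm⟩
    rw [this]
    exact Set.Finite.image _ (Set.toFinite _)
  · rintro ⟨l, r⟩ hlr
    obtain ⟨g, hg, hl, hr⟩ := mem_combTRS.1 hlr
    subst hl hr
    intro n hn
    have hk : n < arγ g := vars_tg num g hn
    exact Set.mem_iUnion.2 ⟨(⟨n, hk⟩ : Fin (arγ g)), rfl⟩

end StmtNine4
section StmtNine5

attribute [local instance] Classical.propDecidable
set_option linter.unusedVariables false
set_option maxHeartbeats 1000000

variable {σ γ : Type} {ar : σ → ℕ} {arγ : γ → ℕ}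

lemma pad_fin {k : ℕ} (v : Fin k → Tm (γ ⊕ Bool) (arExt arγ)) (i : Fin k) :
    pad v i.1 = v i := by
  simp [pad, i.2]

lemma subst_leftComb_succ (θ : ℕ → Tm (γ ⊕ Bool) (arExt arγ)) (k : ℕ) :
    (leftCombE (k + 1)).subst θ = fE ((leftCombE k).subst θ) (θ k) := by
  rw [leftCombE, subst_fE]; rfl

lemma shE_ne_fE (a b : Tm (γ ⊕ Bool) (arExt arγ)) : shE ≠ fE a b := by
  intro h
  obtain ⟨hf, -⟩ := app_inj2 h
  simp at hf

lemma rightComb_inj {m m' : ℕ} (h : rightCombE (arγ := arγ) m = rightCombE m') : m = m' := by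
  induction m generalizing m' with
  | zero =>
    cases m' with
    | zero => rfl
    | succ m' => exact absurd h (shE_ne_fE _ _)
  | succ m ih =>
    cases m' with
    | zero => exact absurd h.symm (shE_ne_fE _ _)
    | succ m' =>
      obtain ⟨-, h2⟩ := fE_inj h
      rw [ih h2]

lemma leftComb_subst_len {k k' : ℕ} {θ θ' : ℕ → Tm (γ ⊕ Bool) (arExt arγ)}
    (h : (leftCombE k).subst θ = (leftCombE k').subst θ') : k = k' := by
  induction k generalizing k' with
  | zero =>
    cases k' with
    | zero => rfl
    | succ k' =>
      rw [leftCombE, subst_shE, subst_leftComb_succ] at h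
      exact absurd h (shE_ne_fE _ _)
  | succ k ih =>
    cases k' with
    | zero =>
      rw [leftCombE, subst_shE, subst_leftComb_succ] at h
      exact absurd h.symm (shE_ne_fE _ _)
    | succ k' =>
      rw [subst_leftComb_succ, subst_leftComb_succ] at h
      obtain ⟨h1, -⟩ := fE_inj h
      rw [ih h1]

lemma leftComb_subst_comp {k : ℕ} {θ θ' : ℕ → Tm (γ ⊕ Bool) (arExt arγ)}
    (h : (leftCombE k).subst θ = (leftCombE k).subst θ') : ∀ n < k, θ n = θ' n := by
  induction k with
  | zero => exact fun n hn => absurd hn (Nat.not_lt_zero n)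
  | succ k ih =>
    rw [subst_leftComb_succ, subst_leftComb_succ] at h
    obtain ⟨h1, h2⟩ := fE_inj h
    intro n hn
    rcases Nat.lt_succ_iff_lt_or_eq.1 hn with hn' | rfl
    · exact ih h1 n hn'
    · exact h2

lemma enc_good (P : γ → Prop) (num : γ → ℕ) {g : γ} (hg : P g) (ts : Fin (arγ g) → Tm γ arγ) :
    enc P num (.app g ts) = .app (Sum.inl g) (fun i : Fin (arγ g) => enc P num (ts i)) := by
  rw [enc_app, if_pos hg]

lemma enc_bad (P : γ → Prop) (num : γ → ℕ) {g : γ} (hg : ¬ P g) (ts : Fin (arγ g) → Tm γ arγ) :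
    enc P num (.app g ts) =
      fE ((leftCombE (arγ g)).subst (pad fun i => enc P num (ts i))) (rightCombE (num g)) := by
  rw [enc_app, if_neg hg, tg, subst_fE, subst_rightComb]

/-- `enc` is injective -/
lemma enc_inj (P : γ → Prop) (num : γ → ℕ)
    (hinjnum : ∀ g g', ¬ P g → ¬ P g' → num g = num g' → g = g') :
    ∀ {t u : Tm γ arγ}, enc P num t = enc P num u → t = u := by
  intro t
  induction t with
  | var n =>
    intro u h
    cases u with
    | var m => rw [enc_var, enc_var] at h; injection h with h'; rw [h']
    | app g us =>
      by_cases hg : P g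
      · rw [enc_var, enc_good P num hg] at h; exact nomatch h
      · rw [enc_var, enc_bad P num hg] at h; exact nomatch h
  | app g ts ih =>
    intro u h
    cases u with
    | var m =>
      by_cases hg : P g
      · rw [enc_var, enc_good P num hg] at h; exact nomatch h
      · rw [enc_var, enc_bad P num hg] at h; exact nomatch h
    | app g' us =>
      by_cases hg : P g <;> by_cases hg' : P g'
      · rw [enc_good P num hg, enc_good P num hg'] at h
        obtain ⟨hf, hts⟩ := app_inj2 h
        obtain rfl : g = g' := Sum.inl.inj hf
        exact congrArg (Tm.app g) (funext fun i => ih i (congrFun (eq_of_heq hts) i))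
      · rw [enc_good P num hg, enc_bad P num hg'] at h
        obtain ⟨hf, -⟩ := app_inj2 h
        simp at hf
      · rw [enc_bad P num hg, enc_good P num hg'] at h
        obtain ⟨hf, -⟩ := app_inj2 h
        simp at hf
      · rw [enc_bad P num hg, enc_bad P num hg'] at h
        obtain ⟨h1, h2⟩ := fE_inj h
        obtain rfl : g = g' := hinjnum _ _ hg hg' (rightComb_inj h2)
        refine congrArg (Tm.app g) (funext fun i => ?_)
        have := leftComb_subst_comp h1 i.1 i.2
        rw [pad_fin, pad_fin] at this
        exact ih i this

lemma vars_map {σ' γ' : Type} {ar' : σ' → ℕ} {arγ' : γ' → ℕ}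
    (ι : σ' → γ') (h : ∀ s, arγ' (ι s) = ar' s) (t : Tm σ' ar') (n : ℕ) :
    n ∈ (t.map ι h).vars ↔ n ∈ t.vars := by
  induction t with
  | var m => exact Iff.rfl
  | app f ts ih =>
    constructor
    · intro hn
      obtain ⟨i, hi⟩ := Set.mem_iUnion.1 hn
      exact Set.mem_iUnion.2 ⟨Fin.cast (h f) i, (ih _ ).1 hi⟩
    · intro hn
      obtain ⟨j, hj⟩ := Set.mem_iUnion.1 hn
      refine Set.mem_iUnion.2 ⟨Fin.cast (h f).symm j, ?_⟩
      show n ∈ ((ts (Fin.cast (h f) (Fin.cast (h f).symm j))).map ι h).vars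
      rw [show Fin.cast (h f) (Fin.cast (h f).symm j) = j from Fin.ext rfl]
      exact (ih j).2 hj

lemma mem_mapRules {σ' γ' : Type} {ar' : σ' → ℕ} {arγ' : γ' → ℕ}
    {ι : σ' → γ'} {h : ∀ s, arγ' (ι s) = ar' s} {R : Set (Tm σ' ar' × Tm σ' ar')}
    {l r : Tm γ' arγ'} :
    (l, r) ∈ mapRules ι h R ↔ ∃ p ∈ R, p.1.map ι h = l ∧ p.2.map ι h = r := by
  simp [mapRules, Prod.ext_iff]

lemma enc_subst_map (P : γ → Prop) (num : γ → ℕ) (ι : σ → γ) (har : ∀ s, arγ (ι s) = ar s)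
    (hP : ∀ s, P (ι s)) (t : Tm σ ar) (θ : ℕ → Tm γ arγ) :
    enc P num ((t.map ι har).subst θ) =
      (t.map (Sum.inl ∘ ι) (fun s => har s)).subst (fun n => enc P num (θ n)) := by
  induction t with
  | var n => rfl
  | app c ls ih =>
    show enc P num (Tm.app (ι c) fun i => ((ls (Fin.cast (har c) i)).map ι har).subst θ) =
      Tm.app (Sum.inl (ι c)) fun i =>
        ((ls (Fin.cast (har c) i)).map (Sum.inl ∘ ι) (fun s => har s)).subst
          (fun n => enc P num (θ n))
    rw [enc_good P num (hP c)]
    exact congrArg (Tm.app (Sum.inl (ι c))) (funext fun i => ih (Fin.cast (har c) i))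

/-- matching an encoded term against (the image of) a left-hand side -/
lemma match_enc (P : γ → Prop) (num : γ → ℕ)
    (hinjnum : ∀ g g', ¬ P g → ¬ P g' → num g = num g' → g = g')
    (ι : σ → γ) (har : ∀ s, arγ (ι s) = ar s) (hP : ∀ s, P (ι s)) :
    ∀ (l : Tm σ ar) (r : Tm γ arγ) (θ' : ℕ → Tm (γ ⊕ Bool) (arExt arγ)),
      enc P num r = (l.map (Sum.inl ∘ ι) (fun s => har s)).subst θ' →
      ∃ θ : ℕ → Tm γ arγ,
        r = (l.map ι har).subst θ ∧ ∀ n ∈ l.vars, θ' n = enc P num (θ n) := by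
  intro l
  induction l with
  | var p =>
    intro r θ' h
    refine ⟨fun _ => r, rfl, fun n hn => ?_⟩
    obtain rfl : n = p := hn
    exact h.symm
  | app c ls ih =>
    intro r θ' h
    have h' : enc P num r = Tm.app (Sum.inl (ι c))
        (fun i => ((ls (Fin.cast (har c) i)).map (Sum.inl ∘ ι) (fun s => har s)).subst θ') := h
    cases r with
    | var n => exact absurd h' (by rw [enc_var]; exact fun hh => nomatch hh)
    | app g us =>
      by_cases hg : P g
      swap
      · rw [enc_bad P num hg] at h'
        obtain ⟨hf, -⟩ := app_inj2 h'
        simp at hf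
      rw [enc_good P num hg] at h'
      obtain ⟨hf, hts⟩ := app_inj2 h'
      obtain rfl : g = ι c := Sum.inl.inj hf
      have hF := eq_of_heq hts
      have key : ∀ j : Fin (ar c),
          enc P num (us (Fin.cast (har c).symm j)) =
            ((ls j).map (Sum.inl ∘ ι) (fun s => har s)).subst θ' := by
        intro j
        have := congrFun hF (Fin.cast (har c).symm j)
        rwa [show Fin.cast (har c) (Fin.cast (har c).symm j) = j from Fin.ext rfl] at this
      choose Θ hΘ1 hΘ2 using fun j : Fin (ar c) => ih j (us (Fin.cast (har c).symm j)) θ' (key j)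
      have hcons : ∀ (j j' : Fin (ar c)) n, n ∈ (ls j).vars → n ∈ (ls j').vars →
          Θ j n = Θ j' n := by
        intro j j' n hn hn'
        refine enc_inj P num hinjnum ?_
        rw [← hΘ2 j n hn, ← hΘ2 j' n hn']
      obtain ⟨θ, hθ⟩ : ∃ θ : ℕ → Tm γ arγ,
          ∀ (j : Fin (ar c)) n, n ∈ (ls j).vars → θ n = Θ j n := by
        refine ⟨fun n => if hh : ∃ j, n ∈ (ls j).vars then Θ hh.choose n else Tm.var n,
          fun j n hn => ?_⟩
        have hex : ∃ j, n ∈ (ls j).vars := ⟨j, hn⟩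
        simp only [dif_pos hex]
        exact hcons _ j n hex.choose_spec hn
      refine ⟨θ, ?_, ?_⟩
      · show Tm.app (ι c) us =
          Tm.app (ι c) (fun i => ((ls (Fin.cast (har c) i)).map ι har).subst θ)
        refine congrArg (Tm.app (ι c)) (funext fun i => ?_)
        have h1 := hΘ1 (Fin.cast (har c) i)
        rw [show Fin.cast (har c).symm (Fin.cast (har c) i) = i from Fin.ext rfl] at h1
        rw [h1]
        refine subst_eqOn fun n hn => ?_
        exact (hθ _ n ((vars_map _ _ _ n).1 hn)).symm
      · intro n hn
        obtain ⟨j, hjn⟩ := Set.mem_iUnion.1 hn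
        rw [hθ j n hjn]
        exact hΘ2 j n hjn

end StmtNine5
section StmtNine6

attribute [local instance] Classical.propDecidable
set_option linter.unusedVariables false
set_option maxHeartbeats 1000000

variable {σ γ : Type} {ar : σ → ℕ} {arγ : γ → ℕ}

lemma fin2_cases (i : Fin 2) : i = 0 ∨ i = 1 :=
  fin2_all (P := fun j => j = 0 ∨ j = 1) (Or.inl rfl) (Or.inr rfl) i

lemma update2_0 (a b x : Tm (γ ⊕ Bool) (arExt arγ)) :
    Function.update (![a, b] : Fin (arExt arγ (Sum.inr true)) → Tm (γ ⊕ Bool) (arExt arγ))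
      (0 : Fin 2) x = ![x, b] := by
  refine fin2_ext ?_ ?_
  · exact Function.update_self _ _ _
  · exact Function.update_of_ne (by decide) _ _

lemma update2_1 (a b x : Tm (γ ⊕ Bool) (arExt arγ)) :
    Function.update (![a, b] : Fin (arExt arγ (Sum.inr true)) → Tm (γ ⊕ Bool) (arExt arγ))
      (1 : Fin 2) x = ![a, x] := by
  refine fin2_ext ?_ ?_
  · exact Function.update_of_ne (by decide) _ _
  · exact Function.update_self _ _ _

lemma step_fE_left {Q : Set (Tm (γ ⊕ Bool) (arExt arγ) × Tm (γ ⊕ Bool) (arExt arγ))}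
    {a a' b : Tm (γ ⊕ Bool) (arExt arγ)} (h : Step Q a a') : Step Q (fE a b) (fE a' b) := by
  have hst := Step.congr (f := Sum.inr true) (ts := ![a, b]) (i := (0 : Fin 2)) (t' := a') h
  erw [update2_0] at hst; exact hst

lemma step_fE_right {Q : Set (Tm (γ ⊕ Bool) (arExt arγ) × Tm (γ ⊕ Bool) (arExt arγ))}
    {a b b' : Tm (γ ⊕ Bool) (arExt arγ)} (h : Step Q b b') : Step Q (fE a b) (fE a b') := by
  have hst := Step.congr (f := Sum.inr true) (ts := ![a, b]) (i := (1 : Fin 2)) (t' := b') h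
  erw [update2_1] at hst; exact hst

lemma pad_update {k : ℕ} (v : Fin k → Tm (γ ⊕ Bool) (arExt arγ)) (i : Fin k)
    (x : Tm (γ ⊕ Bool) (arExt arγ)) :
    pad (Function.update v i x) = Function.update (pad v) i.1 x := by
  funext n
  by_cases hn : n < k
  · by_cases hni : n = i.1
    · subst hni
      rw [show (pad (Function.update v i x)) i.1 = Function.update v i x ⟨i.1, hn⟩ from by
        simp [pad, hn]]
      rw [show (⟨i.1, hn⟩ : Fin k) = i from Fin.ext rfl, Function.update_self,
        Function.update_self]
    · have h1 : (⟨n, hn⟩ : Fin k) ≠ i := fun hc => hni (by rw [← hc])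
      rw [show (pad (Function.update v i x)) n = Function.update v i x ⟨n, hn⟩ from by
        simp [pad, hn]]
      rw [Function.update_of_ne h1, Function.update_of_ne hni]
      simp [pad, hn]
  · have hni : n ≠ i.1 := fun hc => hn (hc ▸ i.2)
    rw [Function.update_of_ne hni]
    simp [pad, hn]

lemma noL_step {R : Set (Tm σ ar × Tm σ ar)} (hvars : ∀ lr ∈ R, lr.2.vars ⊆ lr.1.vars)
    (ι : σ → γ) (har : ∀ s, arγ (ι s) = ar s)
    {t u : Tm (γ ⊕ Bool) (arExt arγ)}
    (h : Step (mapRules (Sum.inl ∘ ι) (fun s => har s) R) t u) :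
    NoL t → NoL u → t = u ∧ ∃ p, (Tm.var p, Tm.var p) ∈ R := by
  induction h with
  | rule θ hm =>
    intro ht hu
    obtain ⟨⟨l, ρ⟩, hmem, hl, hr⟩ := mem_mapRules.1 hm
    subst hl
    subst hr
    cases l with
    | app c ls => exact ((ht : False)).elim
    | var p =>
      cases ρ with
      | app c ls => exact ((hu : False)).elim
      | var q =>
        have hq : q = p := hvars _ hmem (rfl : q ∈ ({q} : Set ℕ))
        subst hq
        exact ⟨rfl, q, hmem⟩
  | congr i hs ih =>
    rename_i f ts t'
    intro ht hu
    match f with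
    | Sum.inl g => exact ((ht : False)).elim
    | Sum.inr b =>
      have hu' : NoL t' := by
        have := hu i
        rwa [Function.update_self] at this
      obtain ⟨heq, hp⟩ := ih (ht i) hu'
      refine ⟨?_, hp⟩
      rw [← heq, Function.update_eq_self]

lemma step_leftComb {Q : Set (Tm (γ ⊕ Bool) (arExt arγ) × Tm (γ ⊕ Bool) (arExt arγ))}
    (k n : ℕ) (hn : n < k) (θ : ℕ → Tm (γ ⊕ Bool) (arExt arγ))
    (u : Tm (γ ⊕ Bool) (arExt arγ)) (h : Step Q (θ n) u) :
    Step Q ((leftCombE k).subst θ) ((leftCombE k).subst (Function.update θ n u)) := by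
  induction k with
  | zero => omega
  | succ k ih =>
    rw [subst_leftComb_succ, subst_leftComb_succ]
    rcases Nat.lt_succ_iff_lt_or_eq.1 hn with hn' | rfl
    · rw [show Function.update θ n u k = θ k from
        Function.update_of_ne (Nat.ne_of_lt hn').symm _ _]
      exact step_fE_left (ih hn')
    · rw [Function.update_self]
      rw [show (leftCombE (arγ := arγ) n).subst (Function.update θ n u) =
          (leftCombE n).subst θ from
        subst_eqOn fun m hm =>
          Function.update_of_ne (Nat.ne_of_lt ((vars_leftComb n m).1 hm)) _ _]
      exact step_fE_right h

lemma step_leftComb_inv {R : Set (Tm σ ar × Tm σ ar)}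
    (hvars : ∀ lr ∈ R, lr.2.vars ⊆ lr.1.vars)
    (ι : σ → γ) (har : ∀ s, arγ (ι s) = ar s) :
    ∀ (k : ℕ) (θ θ' : ℕ → Tm (γ ⊕ Bool) (arExt arγ)),
      Step (mapRules (Sum.inl ∘ ι) (fun s => har s) R)
        ((leftCombE k).subst θ) ((leftCombE k).subst θ') →
      (∃ i < k, Step (mapRules (Sum.inl ∘ ι) (fun s => har s) R) (θ i) (θ' i) ∧
        ∀ j < k, j ≠ i → θ j = θ' j) ∨
      ((∀ j < k, θ j = θ' j) ∧ ∃ p, (Tm.var p, Tm.var p) ∈ R) := by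
  intro k
  induction k with
  | zero =>
    intro θ θ' h
    rw [leftCombE, subst_shE, subst_shE] at h
    obtain ⟨-, hp⟩ := noL_step hvars ι har h noL_shE noL_shE
    exact Or.inr ⟨fun j hj => absurd hj (Nat.not_lt_zero j), hp⟩
  | succ k ih =>
    intro θ θ' h
    rw [subst_leftComb_succ, subst_leftComb_succ] at h
    rcases step_inv h with ⟨l', r', θ'', hm, htE, huE⟩ | ⟨f₀, ts₀, i, t', hs, htE, huE⟩
    · obtain ⟨⟨l, ρ⟩, hmem, hl, hr⟩ := mem_mapRules.1 hm
      subst hl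
      subst hr
      cases l with
      | app c ls =>
        obtain ⟨hf, -⟩ := app_inj2 htE
        simp at hf
      | var p =>
        cases ρ with
        | app c ls =>
          obtain ⟨hf, -⟩ := app_inj2 huE
          simp at hf
        | var q =>
          have hq : q = p := hvars _ hmem (rfl : q ∈ ({q} : Set ℕ))
          subst hq
          have heq : fE ((leftCombE k).subst θ) (θ k) =
              fE ((leftCombE k).subst θ') (θ' k) := htE.trans huE.symm
          obtain ⟨h1, h2⟩ := fE_inj heq
          refine Or.inr ⟨fun j hj => ?_, q, hmem⟩
          rcases Nat.lt_succ_iff_lt_or_eq.1 hj with hj' | rfl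
          · exact leftComb_subst_comp h1 j hj'
          · exact h2
    · obtain ⟨hf, hts⟩ := app_inj2 htE
      cases hf
      have hts' := eq_of_heq hts
      subst hts'
      rw [huE] at h
      have hcomp := app_inj (huE.symm :
        Tm.app (Sum.inr true) (Function.update (![(leftCombE k).subst θ, θ k]) i t') =
        Tm.app (Sum.inr true) (![(leftCombE k).subst θ', θ' k]))
      rcases fin2_cases i with rfl | rfl
      · erw [update2_0] at hcomp
        have c0 : t' = (leftCombE k).subst θ' := congrFun hcomp 0
        have c1 : θ k = θ' k := congrFun hcomp 1
        rw [c0] at hs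
        rcases ih θ θ' hs with ⟨i₀, hi₀, hstep, hag⟩ | ⟨hag, hp⟩
        · refine Or.inl ⟨i₀, Nat.lt_succ_of_lt hi₀, hstep, fun j hj hne => ?_⟩
          rcases Nat.lt_succ_iff_lt_or_eq.1 hj with hj' | rfl
          · exact hag j hj' hne
          · exact c1
        · refine Or.inr ⟨fun j hj => ?_, hp⟩
          rcases Nat.lt_succ_iff_lt_or_eq.1 hj with hj' | rfl
          · exact hag j hj'
          · exact c1
      · erw [update2_1] at hcomp
        have c0 : (leftCombE (arγ := arγ) k).subst θ = (leftCombE k).subst θ' :=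
          congrFun hcomp 0
        have c1 : t' = θ' k := congrFun hcomp 1
        rw [c1] at hs
        refine Or.inl ⟨k, Nat.lt_succ_self k, hs, fun j hj hne => ?_⟩
        have hj' : j < k := by omega
        exact leftComb_subst_comp c0 j hj'

lemma enc_step {R : Set (Tm σ ar × Tm σ ar)} (P : γ → Prop) (num : γ → ℕ)
    (ι : σ → γ) (har : ∀ s, arγ (ι s) = ar s) (hP : ∀ s, P (ι s))
    {r s : Tm γ arγ} (h : Step (mapRules ι har R) r s) :
    Step (mapRules (Sum.inl ∘ ι) (fun s => har s) R) (enc P num r) (enc P num s) := by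
  induction h with
  | rule θ hm =>
    obtain ⟨⟨l, ρ⟩, hmem, hl, hr⟩ := mem_mapRules.1 hm
    subst hl
    subst hr
    rw [enc_subst_map P num ι har hP, enc_subst_map P num ι har hP]
    exact Step.rule _ (mem_mapRules.2 ⟨(l, ρ), hmem, rfl, rfl⟩)
  | congr i hs ih =>
    rename_i g ts t'
    by_cases hg : P g
    · rw [enc_good P num hg, enc_good P num hg]
      rw [show (fun j : Fin (arγ g) => enc P num (Function.update ts i t' j)) =
          Function.update (fun j : Fin (arγ g) => enc P num (ts j)) i (enc P num t') from
        funext fun j => Function.apply_update (fun _ => enc P num) ts i t' j]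
      exact Step.congr (f := Sum.inl g)
        (ts := fun j : Fin (arγ g) => enc P num (ts j)) i ih
    · rw [enc_bad P num hg, enc_bad P num hg]
      rw [show (pad fun j : Fin (arγ g) => enc P num (Function.update ts i t' j)) =
          Function.update (pad fun j : Fin (arγ g) => enc P num (ts j)) i.1 (enc P num t') from by
        rw [show (fun j : Fin (arγ g) => enc P num (Function.update ts i t' j)) =
            Function.update (fun j : Fin (arγ g) => enc P num (ts j)) i (enc P num t') from
          funext fun j => Function.apply_update (fun _ => enc P num) ts i t' j]
        exact pad_update _ i _]
      refine step_fE_left ?_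
      have := step_leftComb (Q := mapRules (Sum.inl ∘ ι) (fun s => har s) R) (arγ g) i.1 i.2
        (pad fun j : Fin (arγ g) => enc P num (ts j)) (enc P num t') ?_
      · exact this
      · rw [pad_fin]
        exact ih

end StmtNine6
section StmtNine7

attribute [local instance] Classical.propDecidable
set_option linter.unusedVariables false
set_option maxHeartbeats 1000000

variable {σ γ : Type} {ar : σ → ℕ} {arγ : γ → ℕ}

lemma pad_lt {k : ℕ} (v : Fin k → Tm (γ ⊕ Bool) (arExt arγ)) {n : ℕ} (hn : n < k) :
    pad v n = v ⟨n, hn⟩ := by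
  simp [pad, hn]

lemma dec_step_rule {R : Set (Tm σ ar × Tm σ ar)} (P : γ → Prop) (num : γ → ℕ)
    (hinjnum : ∀ g g', ¬ P g → ¬ P g' → num g = num g' → g = g')
    (hvars : ∀ lr ∈ R, lr.2.vars ⊆ lr.1.vars)
    (ι : σ → γ) (har : ∀ s, arγ (ι s) = ar s) (hP : ∀ s, P (ι s))
    {r s : Tm γ arγ} {l' r' : Tm (γ ⊕ Bool) (arExt arγ)} {θ'' : ℕ → Tm (γ ⊕ Bool) (arExt arγ)}
    (hm : (l', r') ∈ mapRules (Sum.inl ∘ ι) (fun s => har s) R)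
    (ht : enc P num r = l'.subst θ'') (hu : enc P num s = r'.subst θ'') :
    Step (mapRules ι har R) r s := by
  obtain ⟨⟨l, ρ⟩, hmem, hl, hr⟩ := mem_mapRules.1 hm
  subst hl
  subst hr
  obtain ⟨θ, hrθ, hagree⟩ := match_enc P num hinjnum ι har hP l r θ'' ht
  have hs' : enc P num s = enc P num ((ρ.map ι har).subst θ) := by
    rw [hu, enc_subst_map P num ι har hP]
    refine subst_eqOn fun n hn => ?_
    exact hagree n (hvars (l, ρ) hmem ((vars_map _ _ _ n).1 hn))
  have hseq := enc_inj P num hinjnum hs'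
  rw [hrθ, hseq]
  exact Step.rule θ (mem_mapRules.2 ⟨(l, ρ), hmem, rfl, rfl⟩)

lemma dec_step {R : Set (Tm σ ar × Tm σ ar)} (P : γ → Prop) (num : γ → ℕ)
    (hinjnum : ∀ g g', ¬ P g → ¬ P g' → num g = num g' → g = g')
    (hvars : ∀ lr ∈ R, lr.2.vars ⊆ lr.1.vars)
    (ι : σ → γ) (har : ∀ s, arγ (ι s) = ar s) (hP : ∀ s, P (ι s)) :
    ∀ (r s : Tm γ arγ),
      Step (mapRules (Sum.inl ∘ ι) (fun s => har s) R) (enc P num r) (enc P num s) →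
      Step (mapRules ι har R) r s := by
  intro r
  induction r with
  | var n =>
    intro s h
    rcases step_inv h with ⟨l', r', θ'', hm, ht, hu⟩ | ⟨f₀, ts₀, i, t', hs, ht, hu⟩
    · exact dec_step_rule P num hinjnum hvars ι har hP hm ht hu
    · rw [enc_var] at ht
      exact nomatch ht
  | app g ts ih =>
    intro s h
    rcases step_inv h with ⟨l', r', θ'', hm, ht, hu⟩ | ⟨f₀, ts₀, i, t', hs, ht, hu⟩
    · exact dec_step_rule P num hinjnum hvars ι har hP hm ht hu
    · by_cases hg : P g
      · -- good root
        rw [enc_good P num hg] at ht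
        obtain ⟨hf, hts⟩ := app_inj2 ht
        subst hf
        have hts' := eq_of_heq hts
        subst hts'
        cases s with
        | var m => rw [enc_var] at hu; exact nomatch hu
        | app g' us =>
          by_cases hg' : P g'
          · rw [enc_good P num hg'] at hu
            obtain ⟨hf', hts2⟩ := app_inj2 hu
            obtain rfl : g' = g := Sum.inl.inj hf'
            have hW := eq_of_heq hts2
            have hti : enc P num (us i) = t' := by
              rw [congrFun hW i]; exact Function.update_self _ _ _
            have hstep := ih i (us i) (by rw [hti]; exact hs)
            have hus : us = Function.update ts i (us i) := by
              funext j
              rcases eq_or_ne j i with rfl | hj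
              · rw [Function.update_self]
              · rw [Function.update_of_ne hj]
                exact enc_inj P num hinjnum
                  (by rw [congrFun hW j]; exact Function.update_of_ne hj _ _)
            rw [hus]
            exact Step.congr (f := g') (ts := ts) i hstep
          · rw [enc_bad P num hg'] at hu
            obtain ⟨hf', -⟩ := app_inj2 hu
            simp at hf'
      · -- bad root
        rw [enc_bad P num hg] at ht
        obtain ⟨hf, hts⟩ := app_inj2 ht
        subst hf
        have hts' := eq_of_heq hts
        subst hts'
        cases s with
        | var m => rw [enc_var] at hu; exact nomatch hu
        | app g' us =>
          by_cases hg' : P g'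
          · rw [enc_good P num hg'] at hu
            obtain ⟨hf', -⟩ := app_inj2 hu
            simp at hf'
          · rw [enc_bad P num hg'] at hu
            have hcomp := app_inj hu
            rcases fin2_cases i with rfl | rfl
            · erw [update2_0] at hcomp
              have c0 : (leftCombE (arγ g')).subst (pad fun j => enc P num (us j)) = t' :=
                congrFun hcomp 0
              have c1 : rightCombE (arγ := arγ) (num g') = rightCombE (num g) :=
                congrFun hcomp 1
              obtain rfl : g' = g := hinjnum g' g hg' hg (rightComb_inj c1)
              rw [← c0] at hs
              rcases step_leftComb_inv hvars ι har (arγ g')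
                  (pad fun j => enc P num (ts j)) (pad fun j => enc P num (us j)) hs with
                ⟨i₀, hi₀, hstep, hag⟩ | ⟨hag, p, hp⟩
              · rw [pad_lt _ hi₀, pad_lt _ hi₀] at hstep
                have hR := ih ⟨i₀, hi₀⟩ (us ⟨i₀, hi₀⟩) hstep
                have hus : us = Function.update ts ⟨i₀, hi₀⟩ (us ⟨i₀, hi₀⟩) := by
                  funext j
                  rcases eq_or_ne j ⟨i₀, hi₀⟩ with rfl | hj
                  · rw [Function.update_self]
                  · rw [Function.update_of_ne hj]
                    have hagj := hag j.1 j.2 (fun hc => hj (Fin.ext hc))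
                    rw [pad_lt _ j.2, pad_lt _ j.2] at hagj
                    have : enc P num (ts j) = enc P num (us j) := by
                      rw [show (⟨j.1, j.2⟩ : Fin (arγ g')) = j from Fin.ext rfl] at hagj
                      exact hagj
                    exact (enc_inj P num hinjnum this).symm
                rw [hus]
                exact Step.congr _ hR
              · have hus : us = ts := by
                  funext j
                  have hagj := hag j.1 j.2
                  rw [pad_lt _ j.2, pad_lt _ j.2] at hagj
                  have : enc P num (ts j) = enc P num (us j) := by
                    rw [show (⟨j.1, j.2⟩ : Fin (arγ g')) = j from Fin.ext rfl] at hagj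
                    exact hagj
                  exact (enc_inj P num hinjnum this).symm
                rw [hus]
                exact Step.rule (fun _ => Tm.app g' ts)
                  (mem_mapRules.2 ⟨(Tm.var p, Tm.var p), hp, rfl, rfl⟩)
            · erw [update2_1] at hcomp
              have c0 : (leftCombE (arγ g')).subst (pad fun j => enc P num (us j)) =
                  (leftCombE (arγ g)).subst (pad fun j => enc P num (ts j)) :=
                congrFun hcomp 0
              have c1 : rightCombE (arγ := arγ) (num g') = t' := congrFun hcomp 1
              rw [← c1] at hs
              obtain ⟨hrc, p, hp⟩ :=
                noL_step hvars ι har hs (noL_rightComb _) (noL_rightComb _)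
              obtain rfl : g' = g := hinjnum g' g hg' hg (rightComb_inj hrc.symm)
              have hus : us = ts := by
                funext j
                have hagj := leftComb_subst_comp c0 j.1 j.2
                rw [pad_lt _ j.2, pad_lt _ j.2] at hagj
                have : enc P num (us j) = enc P num (ts j) := by
                  rw [show (⟨j.1, j.2⟩ : Fin (arγ g')) = j from Fin.ext rfl] at hagj
                  exact hagj
                exact enc_inj P num hinjnum this
              rw [hus]
              exact Step.rule (fun _ => Tm.app g' ts)
                (mem_mapRules.2 ⟨(Tm.var p, Tm.var p), hp, rfl, rfl⟩)

end StmtNine7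
section StmtNine8

attribute [local instance] Classical.propDecidable
set_option linter.unusedVariables false
set_option maxHeartbeats 1000000

variable {σ γ : Type} {ar : σ → ℕ} {arγ : γ → ℕ}

lemma nf_map_inl (P : γ → Prop) (num : γ → ℕ) (r : Tm γ arγ) :
    nf P num (r.map Sum.inl (fun _ => rfl)) = enc P num r := by
  induction r with
  | var n => rfl
  | app g ts ih =>
    show nf P num (Tm.app (Sum.inl g)
      fun i => (ts (Fin.cast rfl i)).map Sum.inl (fun _ => rfl)) = _
    rw [nf_inl, enc_app]
    by_cases hg : P g
    · rw [if_pos hg, if_pos hg]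
      exact congrArg _ (funext fun i => ih i)
    · rw [if_neg hg, if_neg hg]
      exact congrArg (fun θ => (tg num g).subst θ) (congrArg pad (funext fun i => ih i))

end StmtNine8


theorem stmt_9 {σ γ : Type} {ar : σ → ℕ} {arγ : γ → ℕ} [Finite σ] [Finite γ]
    (R : Set (Tm σ ar × Tm σ ar)) (hR : IsTRS R)
    -- `R` is a TRS over `sign(R)`: every symbol of `σ` occurs in `R`
    (hsign : ∀ s : σ, ∃ lr ∈ R, lr.1.symOccurs s ∨ lr.2.symOccurs s)
    -- `Γ` is a ranked alphabet with `sign(R) ⊆ Γ`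
    (ι : σ → γ) (hinj : Function.Injective ι) (har : ∀ s, arγ (ι s) = ar s)
    -- a numbering of the symbols of `Γ − sign(R)` from `1` to `|Γ − sign(R)|`
    (num : γ → ℕ)
    (hnum : Set.BijOn num {g : γ | g ∉ Set.range ι}
      (Set.Icc 1 (Nat.card {g : γ // g ∉ Set.range ι}))) :
    -- `S` is a convergent TRS, and …
    IsTRS (combTRS (arγ := arγ) (· ∈ Set.range ι) num) ∧
    Terminating (combTRS (arγ := arγ) (· ∈ Set.range ι) num) ∧
    Confluent (combTRS (arγ := arγ) (· ∈ Set.range ι) num) ∧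
    -- … for all `r, s ∈ T_Γ`: `r →_R s ↔ r↓_S →_R s↓_S`
    (∀ r s : Tm γ arγ, r.Ground → s.Ground →
      ∀ r' s' : Tm (γ ⊕ Bool) (arExt arγ),
        NormalFormOf (combTRS (arγ := arγ) (· ∈ Set.range ι) num)
          (r.map Sum.inl fun _ => rfl) r' →
        NormalFormOf (combTRS (arγ := arγ) (· ∈ Set.range ι) num)
          (s.map Sum.inl fun _ => rfl) s' →
        (Step (mapRules ι har R) r s ↔
          Step (mapRules (Sum.inl ∘ ι) (fun t => har t) R) r' s')) := by
  have hinjnum : ∀ g g', ¬ (g ∈ Set.range ι) → ¬ (g' ∈ Set.range ι) →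
      num g = num g' → g = g' := fun g g' hg hg' h => hnum.injOn hg hg' h
  have hP : ∀ s, ι s ∈ Set.range ι := fun s => ⟨s, rfl⟩
  refine ⟨isTRS_comb _ num, terminating_comb _ num, confluent_comb _ num, ?_⟩
  intro r s hrg hsg r' s' hr' hs'
  have hr'e : r' = enc (· ∈ Set.range ι) num r := by
    rw [normalFormOf_eq _ num hr', nf_map_inl]
  have hs'e : s' = enc (· ∈ Set.range ι) num s := by
    rw [normalFormOf_eq _ num hs', nf_map_inl]
  rw [hr'e, hs'e]
  constructor
  · exact fun h => enc_step _ num ι har hP h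
  · exact fun h => dec_step _ num hinjnum hR.2 ι har hP r s h
end
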